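/- arXiv:2602.05795 — 4 statements merged into one kernel-verified Lean document; each statement's English description precedes it below -/
import Mathlib

section
/- For any g ∈ U(m,1), identified with an automorphism of the unit ball B^m ⊂ ℂ^m via z ↦ (Az + b)/(cᵀz + d), one has ‖g(0)‖ = (σ₁(g)² − 1)/(σ₁(g)² + 1), where σ₁(g) denotes the largest singular value of g. -/
open Matrix

noncomputable section

/-- `g ∈ U(m,1)`: the matrix `g` preserves the indefinite Hermitian form
`[v,w] = v₁ w̄₁ + ⋯ + v_m w̄_m − v_{m+1} w̄_{m+1}` on `ℂ^{m+1}`. -/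
def InUmm1 {m : ℕ} (g : Matrix (Fin (m+1)) (Fin (m+1)) ℂ) : Prop :=
  ∀ v w : Fin (m+1) → ℂ,
    (∑ i : Fin m, g.mulVec v i.castSucc * star (g.mulVec w i.castSucc))
      - g.mulVec v (Fin.last m) * star (g.mulVec w (Fin.last m)) =
    (∑ i : Fin m, v i.castSucc * star (w i.castSucc)) - v (Fin.last m) * star (w (Fin.last m))

/-- The fractional linear action of `g = ((A,b),(cᵀ,d))` on `ℂ^m`:
`z ↦ (Az + b)/(cᵀz + d)`. -/
def matAction {m : ℕ} (g : Matrix (Fin (m+1)) (Fin (m+1)) ℂ)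
    (z : EuclideanSpace ℂ (Fin m)) : EuclideanSpace ℂ (Fin m) :=
  WithLp.toLp 2 (fun i : Fin m => (∑ j : Fin m, g i.castSucc j.castSucc * z j + g i.castSucc (Fin.last m)) /
    (∑ j : Fin m, g (Fin.last m) j.castSucc * z j + g (Fin.last m) (Fin.last m)))

/-- `σ₁(g)`: the largest singular value of `g`, i.e. its operator norm as a linear map
on Euclidean space. -/
def sigma1 {m : ℕ} (g : Matrix (Fin (m+1)) (Fin (m+1)) ℂ) : ℝ :=
  ‖LinearMap.toContinuousLinearMap (Matrix.toEuclideanLin g)‖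

lemma hg_real {m : ℕ} {g : Matrix (Fin (m+1)) (Fin (m+1)) ℂ} (hg : InUmm1 g)
    (v : Fin (m+1) → ℂ) :
    (∑ i : Fin m, ‖g.mulVec v i.castSucc‖^2) - ‖g.mulVec v (Fin.last m)‖^2 =
    (∑ i : Fin m, ‖v i.castSucc‖^2) - ‖v (Fin.last m)‖^2 := by
  have h := hg v v
  simp only [RCLike.star_def, Complex.mul_conj, ← Complex.sq_norm] at h
  exact_mod_cast h

lemma col_fact {m : ℕ} {g : Matrix (Fin (m+1)) (Fin (m+1)) ℂ} (hg : InUmm1 g) :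
    (∑ i : Fin m, ‖g i.castSucc (Fin.last m)‖^2) = ‖g (Fin.last m) (Fin.last m)‖^2 - 1 := by
  have h := hg_real hg (Pi.single (Fin.last m) 1)
  simp only [Matrix.mulVec_single, mul_one] at h
  simp only [Pi.single_apply, Fin.castSucc_lt_last, ne_of_lt, if_false, if_true,
    norm_zero, norm_one, one_pow] at h
  norm_num at h
  linarith

def Jm (m : ℕ) : Matrix (Fin (m+1)) (Fin (m+1)) ℂ :=
  Matrix.diagonal (fun i => if i = Fin.last m then (-1:ℂ) else 1)

lemma JJ (m : ℕ) : Jm m * Jm m = 1 := by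
  rw [Jm, Matrix.diagonal_mul_diagonal]
  ext i j
  by_cases h : i = j
  · subst h
    by_cases h2 : i = Fin.last m <;>
      simp [Matrix.diagonal_apply, Matrix.one_apply, h2]
  · simp [Matrix.diagonal_apply, Matrix.one_apply, h]

lemma hM {m : ℕ} {g : Matrix (Fin (m+1)) (Fin (m+1)) ℂ} (hg : InUmm1 g) :
    gᴴ * Jm m * g = Jm m := by
  ext i j
  have h := hg (Pi.single j 1) (Pi.single i 1)
  simp only [Matrix.mulVec_single_one, Matrix.col_apply] at h
  rw [Matrix.mul_assoc, Matrix.mul_apply]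
  simp only [Jm, Matrix.diagonal_mul, Matrix.conjTranspose_apply]
  rw [Fin.sum_univ_castSucc]
  have hsplit : ∀ (x y : Fin (m+1)),
      (∑ k : Fin m, (Pi.single x 1 : Fin (m+1) → ℂ) k.castSucc * star ((Pi.single y 1 : Fin (m+1) → ℂ) k.castSucc))
        - (Pi.single x 1 : Fin (m+1) → ℂ) (Fin.last m) * star ((Pi.single y 1 : Fin (m+1) → ℂ) (Fin.last m)) =
      if x = y then (if x = Fin.last m then (-1:ℂ) else 1) else (0:ℂ) := by
    intro x y
    rcases eq_or_ne x y with rfl | hxy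
    · rcases Fin.eq_castSucc_or_eq_last x with ⟨k, rfl⟩ | rfl
      · rw [if_pos rfl, if_neg (Fin.castSucc_lt_last k).ne]
        rw [Finset.sum_eq_single k]
        · simp [(Fin.castSucc_lt_last k).ne]
        · intro b _ hb
          simp [Pi.single_apply, Fin.castSucc_inj, hb.symm]
        · simp
      · simp [Pi.single_apply, (Fin.castSucc_lt_last _).ne]
    · have hz : ∀ k : Fin (m+1), (Pi.single x 1 : Fin (m+1) → ℂ) k * (starRingEnd ℂ) ((Pi.single y 1 : Fin (m+1) → ℂ) k) = 0 := by
        intro k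
        rcases eq_or_ne k x with rfl | h1
        · simp [Pi.single_eq_of_ne hxy]
        · simp [Pi.single_eq_of_ne h1]
      simp [hz, hxy]
  rw [hsplit j i] at h
  have hsum : ∑ x : Fin m, g x.castSucc j * star (g x.castSucc i)
      = ∑ x : Fin m, star (g x.castSucc i) * g x.castSucc j :=
    Finset.sum_congr rfl (fun x _ => mul_comm _ _)
  rw [hsum] at h
  rw [Matrix.diagonal_apply]
  simp only [if_neg, if_pos, Fin.castSucc_lt_last, ne_of_lt, if_false, if_true, one_mul]
  rcases eq_or_ne i j with rfl | hij
  · simp only [if_pos rfl] at h ⊢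
    linear_combination h
  · rw [if_neg (Ne.symm hij)] at h
    rw [if_neg hij]
    linear_combination h

lemma hN {m : ℕ} {g : Matrix (Fin (m+1)) (Fin (m+1)) ℂ} (hg : InUmm1 g) :
    g * Jm m * gᴴ = Jm m := by
  have h1 : (Jm m * gᴴ * Jm m) * g = 1 := by
    calc (Jm m * gᴴ * Jm m) * g = Jm m * (gᴴ * Jm m * g) := by
          simp only [Matrix.mul_assoc]
      _ = Jm m * Jm m := by rw [hM hg]
      _ = 1 := JJ m
  have h2 : g * (Jm m * gᴴ * Jm m) = 1 := mul_eq_one_comm.mp h1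
  have h3 := congrArg (· * Jm m) h2
  simp only [one_mul] at h3
  calc g * Jm m * gᴴ = g * Jm m * gᴴ * (Jm m * Jm m) := by rw [JJ]; rw [Matrix.mul_one]
    _ = (g * (Jm m * gᴴ * Jm m)) * Jm m := by simp only [Matrix.mul_assoc]
    _ = Jm m := h3

lemma row_fact {m : ℕ} {g : Matrix (Fin (m+1)) (Fin (m+1)) ℂ} (hg : InUmm1 g) :
    (∑ j : Fin m, ‖g (Fin.last m) j.castSucc‖^2) = ‖g (Fin.last m) (Fin.last m)‖^2 - 1 := by
  have h := congrFun (congrFun (hN hg) (Fin.last m)) (Fin.last m)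
  rw [Matrix.mul_assoc, Matrix.mul_apply] at h
  simp only [Jm, Matrix.diagonal_mul, Matrix.conjTranspose_apply, Matrix.diagonal_apply,
    if_pos rfl] at h
  rw [Fin.sum_univ_castSucc] at h
  simp only [Fin.castSucc_lt_last, ne_of_lt, if_neg, if_pos, if_false, if_true,
    one_mul] at h
  have h2 : ∀ k : Fin m, g (Fin.last m) k.castSucc * star (g (Fin.last m) k.castSucc)
      = ((‖g (Fin.last m) k.castSucc‖^2 : ℝ) : ℂ) := by
    intro k
    rw [RCLike.star_def, Complex.mul_conj, ← Complex.sq_norm]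
  simp only [h2, neg_one_mul, mul_neg, RCLike.star_def, Complex.mul_conj,
    ← Complex.sq_norm, ← Complex.ofReal_sum] at h
  have h3 : ((∑ j : Fin m, ‖g (Fin.last m) j.castSucc‖ ^ 2
      - ‖g (Fin.last m) (Fin.last m)‖ ^ 2 : ℝ) : ℂ) = ((-1 : ℝ) : ℂ) := by
    have h' := h
    push_cast at h' ⊢
    linear_combination h'
  have h4 := Complex.ofReal_injective h3
  linarith

lemma sq_eq_of_nonneg {a b : ℝ} (ha : 0 ≤ a) (hb : 0 ≤ b) (h : a^2 = b^2) : a = b := by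
  nlinarith [sq_nonneg (a - b), sq_nonneg (a + b)]

lemma norm_identity {m : ℕ} {g : Matrix (Fin (m+1)) (Fin (m+1)) ℂ} (hg : InUmm1 g)
    (v : EuclideanSpace ℂ (Fin (m+1))) :
    ‖Matrix.toEuclideanLin g v‖^2
      = ‖v‖^2 - 2*‖v (Fin.last m)‖^2 + 2*‖g.mulVec v (Fin.last m)‖^2 := by
  have e1 : ‖Matrix.toEuclideanLin g v‖^2 = ∑ i : Fin (m+1), ‖g.mulVec v i‖^2 := by
    rw [PiLp.norm_sq_eq_of_L2]
    rfl
  have e2 : ‖v‖^2 = ∑ i : Fin (m+1), ‖v i‖^2 := by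
    rw [PiLp.norm_sq_eq_of_L2]
  rw [e1, e2, Fin.sum_univ_castSucc, Fin.sum_univ_castSucc]
  have := hg_real hg v
  linarith

lemma sq_le_of_nonneg {a b : ℝ} (hb : 0 ≤ b) (h : a^2 ≤ b^2) : a ≤ b := by
  nlinarith [sq_nonneg (a - b), sq_nonneg (a + b)]

def bvec {m : ℕ} (g : Matrix (Fin (m+1)) (Fin (m+1)) ℂ) : EuclideanSpace ℂ (Fin m) :=
  WithLp.toLp 2 (fun i : Fin m => g i.castSucc (Fin.last m))

def cvec {m : ℕ} (g : Matrix (Fin (m+1)) (Fin (m+1)) ℂ) : EuclideanSpace ℂ (Fin m) :=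
  WithLp.toLp 2 (fun j : Fin m => g (Fin.last m) j.castSucc)

lemma bvec_sq {m : ℕ} {g : Matrix (Fin (m+1)) (Fin (m+1)) ℂ} (hg : InUmm1 g) :
    ‖bvec g‖^2 = ‖g (Fin.last m) (Fin.last m)‖^2 - 1 := by
  rw [PiLp.norm_sq_eq_of_L2]
  exact col_fact hg

lemma cvec_eq_bvec {m : ℕ} {g : Matrix (Fin (m+1)) (Fin (m+1)) ℂ} (hg : InUmm1 g) :
    ‖cvec g‖ = ‖bvec g‖ := by
  have h1 : ‖cvec g‖^2 = ‖g (Fin.last m) (Fin.last m)‖^2 - 1 := by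
    rw [PiLp.norm_sq_eq_of_L2]
    exact row_fact hg
  have := bvec_sq hg
  exact sq_eq_of_nonneg (norm_nonneg _) (norm_nonneg _) (by linarith)

lemma s_pos {m : ℕ} {g : Matrix (Fin (m+1)) (Fin (m+1)) ℂ} (hg : InUmm1 g) :
    1 ≤ ‖g (Fin.last m) (Fin.last m)‖ := by
  have h := bvec_sq hg
  nlinarith [sq_nonneg ‖bvec g‖, norm_nonneg (g (Fin.last m) (Fin.last m))]

lemma mulVec_last {m : ℕ} (g : Matrix (Fin (m+1)) (Fin (m+1)) ℂ) (v : Fin (m+1) → ℂ) :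
    g.mulVec v (Fin.last m) =
      (∑ j : Fin m, cvec g j * v j.castSucc)
        + g (Fin.last m) (Fin.last m) * v (Fin.last m) := by
  rw [Matrix.mulVec, dotProduct, Fin.sum_univ_castSucc]
  rfl

lemma cauchy {m : ℕ} (g : Matrix (Fin (m+1)) (Fin (m+1)) ℂ) (z : EuclideanSpace ℂ (Fin m)) :
    ‖∑ j : Fin m, cvec g j * z j‖ ≤ ‖cvec g‖ * ‖z‖ := by
  set cc : EuclideanSpace ℂ (Fin m) :=
    (WithLp.equiv 2 (Fin m → ℂ)).symm (fun j => (starRingEnd ℂ) (cvec g j)) with hcc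
  have h : (∑ j : Fin m, cvec g j * z j) = inner ℂ cc z := by
    rw [PiLp.inner_apply]
    simp [hcc, RCLike.inner_apply, WithLp.equiv_symm_apply, PiLp.toLp_apply]
    exact Finset.sum_congr rfl (fun _ _ => mul_comm _ _)
  have h2 : ‖cc‖ = ‖cvec g‖ := by
    have e1 : ‖cc‖^2 = ‖cvec g‖^2 := by
      rw [PiLp.norm_sq_eq_of_L2, PiLp.norm_sq_eq_of_L2]
      simp [hcc, WithLp.equiv_symm_apply, PiLp.toLp_apply]
    exact sq_eq_of_nonneg (norm_nonneg _) (norm_nonneg _) e1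
  rw [h]
  calc ‖(inner ℂ cc z : ℂ)‖ ≤ ‖cc‖ * ‖z‖ := norm_inner_le_norm _ _
    _ = ‖cvec g‖ * ‖z‖ := by rw [h2]

lemma norm_split {m : ℕ} (v : EuclideanSpace ℂ (Fin (m+1))) :
    ‖v‖^2 = ‖((WithLp.equiv 2 (Fin m → ℂ)).symm (fun j => v j.castSucc) : EuclideanSpace ℂ (Fin m))‖^2
      + ‖v (Fin.last m)‖^2 := by
  rw [PiLp.norm_sq_eq_of_L2, PiLp.norm_sq_eq_of_L2, Fin.sum_univ_castSucc]
  simp [WithLp.equiv_symm_apply, PiLp.toLp_apply]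

lemma upper {m : ℕ} {g : Matrix (Fin (m+1)) (Fin (m+1)) ℂ} (hg : InUmm1 g) :
    sigma1 g ≤ ‖bvec g‖ + ‖g (Fin.last m) (Fin.last m)‖ := by
  set t := ‖bvec g‖ with ht
  set s := ‖g (Fin.last m) (Fin.last m)‖ with hs
  have hs1 : 1 ≤ s := s_pos hg
  have hst : s^2 = 1 + t^2 := by have := bvec_sq hg; linarith
  have htpos : 0 ≤ t := norm_nonneg _
  apply ContinuousLinearMap.opNorm_le_bound _ (by linarith)
  intro v
  set v' : EuclideanSpace ℂ (Fin m) :=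
    (WithLp.equiv 2 (Fin m → ℂ)).symm (fun j => v j.castSucc) with hv'
  set lam := ‖v'‖ with hlam
  set mu := ‖v (Fin.last m)‖ with hmu
  have h1 : ‖v‖^2 = lam^2 + mu^2 := norm_split v
  have h2 : ‖g.mulVec v (Fin.last m)‖ ≤ t*lam + s*mu := by
    rw [mulVec_last]
    calc ‖(∑ j : Fin m, cvec g j * v j.castSucc)
          + g (Fin.last m) (Fin.last m) * v (Fin.last m)‖
        ≤ ‖∑ j : Fin m, cvec g j * v j.castSucc‖
          + ‖g (Fin.last m) (Fin.last m) * v (Fin.last m)‖ := norm_add_le _ _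
      _ ≤ t*lam + s*mu := by
          have hc := cauchy g v'
          rw [cvec_eq_bvec hg] at hc
          have : ∀ j : Fin m, v' j = v j.castSucc := fun j => rfl
          simp only [this] at hc
          rw [norm_mul]
          exact add_le_add hc le_rfl
  have h3 := norm_identity hg v
  -- bound on squares
  have hsq : ‖Matrix.toEuclideanLin g v‖^2 ≤ ((t+s) * ‖v‖)^2 := by
    have hb : ‖g.mulVec v (Fin.last m)‖^2 ≤ (t*lam + s*mu)^2 := by
      nlinarith [norm_nonneg (g.mulVec v (Fin.last m))]
    have hlm : 0 ≤ lam := norm_nonneg _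
    have hmm : 0 ≤ mu := norm_nonneg _
    have hs0 : (0:ℝ) ≤ s := by linarith
    calc ‖Matrix.toEuclideanLin g v‖^2
        = lam^2 - mu^2 + 2*‖g.mulVec v (Fin.last m)‖^2 := by rw [h3, h1]; ring
      _ ≤ lam^2 - mu^2 + 2*(t*lam + s*mu)^2 := by linarith
      _ = lam^2 - mu^2 + 2*t^2*lam^2 + 4*t*s*lam*mu + 2*s^2*mu^2 := by ring
      _ = lam^2 - mu^2 + 2*t^2*lam^2 + 4*t*s*lam*mu + 2*(1+t^2)*mu^2 := by rw [hst]
      _ ≤ (t^2 + 2*t*s + (1+t^2))*(lam^2+mu^2) := by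
          nlinarith [mul_nonneg (mul_nonneg htpos hs0) (sq_nonneg (lam - mu))]
      _ = (t+s)^2*(lam^2+mu^2) := by linear_combination (-(lam^2+mu^2))*hst
      _ = ((t+s) * ‖v‖)^2 := by linear_combination (-(t+s)^2) * h1
  have := sq_le_of_nonneg (mul_nonneg (by linarith) (norm_nonneg v)) hsq
  exact this

lemma lower {m : ℕ} {g : Matrix (Fin (m+1)) (Fin (m+1)) ℂ} (hg : InUmm1 g) :
    ‖bvec g‖ + ‖g (Fin.last m) (Fin.last m)‖ ≤ sigma1 g := by
  set t := ‖bvec g‖ with ht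
  set d := g (Fin.last m) (Fin.last m) with hd
  set s := ‖d‖ with hs
  have hs1 : 1 ≤ s := s_pos hg
  have hst : s^2 = 1 + t^2 := by have := bvec_sq hg; linarith
  have htpos : 0 ≤ t := norm_nonneg _
  have hs0 : (0:ℝ) < s := by linarith
  set L := LinearMap.toContinuousLinearMap (Matrix.toEuclideanLin g) with hL
  have hLapp : ∀ v : EuclideanSpace ℂ (Fin (m+1)), L v = Matrix.toEuclideanLin g v :=
    fun v => rfl
  have hσ : (0:ℝ) ≤ sigma1 g := norm_nonneg _
  rcases eq_or_ne t 0 with ht0 | ht0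
  · -- t = 0, s = 1
    have hs1' : s = 1 := by nlinarith
    set v : EuclideanSpace ℂ (Fin (m+1)) :=
      (WithLp.equiv 2 (Fin (m+1) → ℂ)).symm
        (fun j => Fin.lastCases ((starRingEnd ℂ) d) (fun _ => 0) j) with hv
    have hvcast : ∀ i : Fin m, v i.castSucc = 0 := fun i => by
      simp [hv, WithLp.equiv_symm_apply, PiLp.toLp_apply]
    have hvlast : v (Fin.last m) = (starRingEnd ℂ) d := by
      simp [hv, WithLp.equiv_symm_apply, PiLp.toLp_apply]
    have hvnorm : ‖v‖^2 = 1 := by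
      rw [PiLp.norm_sq_eq_of_L2, Fin.sum_univ_castSucc]
      simp [hvcast, hvlast, ← hs, hs1']
    have hmul : g.mulVec v (Fin.last m) = ((s^2 : ℝ) : ℂ) := by
      rw [mulVec_last]
      simp only [hvcast, hvlast, mul_zero, Finset.sum_const_zero, zero_add]
      rw [Complex.mul_conj, ← Complex.sq_norm]
    have hLv : ‖L v‖^2 = 1 := by
      rw [hLapp, norm_identity hg v, hvnorm, hvlast, hmul]
      simp only [Complex.norm_real, Real.norm_eq_abs, RCLike.norm_conj]
      rw [abs_of_nonneg (by positivity : (0:ℝ) ≤ s^2)]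
      rw [← hs, hs1']; norm_num
    have hLv' : ‖L v‖ = 1 := sq_eq_of_nonneg (norm_nonneg _) zero_le_one (by rw [hLv]; ring)
    have h1 := L.le_opNorm v
    have hvn : ‖v‖ = 1 := sq_eq_of_nonneg (norm_nonneg _) zero_le_one (by rw [hvnorm]; ring)
    rw [hLv', hvn, mul_one] at h1
    rw [ht0, hs1', zero_add]
    exact h1
  · have htpos' : 0 < t := lt_of_le_of_ne htpos (Ne.symm ht0)
    set v : EuclideanSpace ℂ (Fin (m+1)) :=
      (WithLp.equiv 2 (Fin (m+1) → ℂ)).symm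
        (fun j => Fin.lastCases ((starRingEnd ℂ) d * ((t/s : ℝ) : ℂ))
          (fun i => (starRingEnd ℂ) (cvec g i)) j) with hv
    have hvcast : ∀ i : Fin m, v i.castSucc = (starRingEnd ℂ) (cvec g i) := fun i => by
      simp [hv, WithLp.equiv_symm_apply, PiLp.toLp_apply]
    have hvlast : v (Fin.last m) = (starRingEnd ℂ) d * ((t/s : ℝ) : ℂ) := by
      simp [hv, WithLp.equiv_symm_apply, PiLp.toLp_apply]
    have hcsum : (∑ j : Fin m, ‖cvec g j‖^2) = t^2 := by
      rw [← PiLp.norm_sq_eq_of_L2, cvec_eq_bvec hg]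
    have hvnorm : ‖v‖^2 = 2*t^2 := by
      rw [PiLp.norm_sq_eq_of_L2, Fin.sum_univ_castSucc]
      simp only [hvcast, hvlast, norm_mul, RCLike.norm_conj, Complex.norm_real,
        Real.norm_eq_abs]
      rw [hcsum, abs_of_nonneg (div_nonneg htpos (le_of_lt hs0)), ← hs]
      field_simp
      ring
    have hmul : g.mulVec v (Fin.last m) = ((t^2 + s*t : ℝ) : ℂ) := by
      rw [mulVec_last]
      have h1 : ∀ j : Fin m, cvec g j * v j.castSucc = ((‖cvec g j‖^2 : ℝ) : ℂ) := fun j => by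
        rw [hvcast, Complex.mul_conj, ← Complex.sq_norm]
      rw [Finset.sum_congr rfl (fun j _ => h1 j), ← Complex.ofReal_sum, hcsum, hvlast]
      rw [← mul_assoc, Complex.mul_conj, ← Complex.sq_norm, ← hs]
      push_cast
      have : (s:ℂ) ≠ 0 := by exact_mod_cast ne_of_gt hs0
      field_simp
    have hLv : ‖L v‖^2 = 2*(t*(t+s))^2 := by
      rw [hLapp, norm_identity hg v, hvnorm, hvlast, hmul]
      rw [Complex.norm_real, Real.norm_eq_abs,
        abs_of_nonneg (by nlinarith : (0:ℝ) ≤ t^2 + s*t)]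
      rw [norm_mul, RCLike.norm_conj, Complex.norm_real, Real.norm_eq_abs,
        abs_of_nonneg (div_nonneg htpos (le_of_lt hs0)), ← hs]
      field_simp
      ring
    have h1 := L.le_opNorm v
    have hLn : ‖L‖ = sigma1 g := rfl
    rw [hLn] at h1
    have h2' := mul_self_le_mul_self (norm_nonneg (L v)) h1
    have e1 : ‖L v‖ * ‖L v‖ = 2*(t*(t+s))^2 := by rw [← pow_two]; exact hLv
    have e2 : sigma1 g * ‖v‖ * (sigma1 g * ‖v‖) = (sigma1 g)^2 * (2*t^2) := by
      linear_combination (sigma1 g)^2 * hvnorm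
    rw [e1, e2] at h2'
    have h3 : (t+s)^2 ≤ (sigma1 g)^2 := by
      nlinarith [mul_pos htpos' htpos', sq_nonneg (t+s)]
    exact sq_le_of_nonneg hσ h3

/-- For `g ∈ U(m,1)` acting on the ball by fractional linear
transformations, `‖g(0)‖ = (σ₁(g)² − 1)/(σ₁(g)² + 1)`. -/
theorem stmt4 {m : ℕ} (g : Matrix (Fin (m+1)) (Fin (m+1)) ℂ) (hg : InUmm1 g) :
    ‖matAction g 0‖ = (sigma1 g ^ 2 - 1) / (sigma1 g ^ 2 + 1) := by
  set t := ‖bvec g‖ with ht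
  set s := ‖g (Fin.last m) (Fin.last m)‖ with hs
  have hs1 : 1 ≤ s := s_pos hg
  have hst : s^2 = 1 + t^2 := by have := bvec_sq hg; linarith
  have htpos : 0 ≤ t := norm_nonneg _
  have hσ : sigma1 g = t + s := le_antisymm (upper hg) (lower hg)
  have hact : ∀ i : Fin m, matAction g 0 i = bvec g i / g (Fin.last m) (Fin.last m) := by
    intro i
    simp [matAction, bvec]
  have hnorm2 : ‖matAction g 0‖^2 = (t/s)^2 := by
    rw [PiLp.norm_sq_eq_of_L2]
    simp only [hact, norm_div]
    rw [Finset.sum_congr rfl (fun i _ => div_pow _ _ 2), ← Finset.sum_div]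
    rw [show (∑ i : Fin m, ‖bvec g i‖^2) = t^2 from by rw [← PiLp.norm_sq_eq_of_L2]]
    rw [div_pow]
  have hval : ‖matAction g 0‖ = t/s :=
    sq_eq_of_nonneg (norm_nonneg _) (div_nonneg htpos (by linarith)) hnorm2
  rw [hval, hσ]
  rw [div_eq_div_iff (by nlinarith : (s:ℝ) ≠ 0) (by nlinarith : ((t+s)^2 + 1 : ℝ) ≠ 0)]
  linear_combination (-(t+s))*hst
end
end

section
/- Let g ∈ U(m,1) act on the ball B^m by fractional linear transformations and let λ₁(g) denote the spectral radius of g (largest absolute value of eigenvalues). Then lim_{n→∞} (1/n) log(1 − ‖gⁿ(0)‖) = −2 log λ₁(g). -/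
open Matrix Filter

noncomputable section

namespace Stmt5Aux

variable {m : ℕ}

/-- the signature matrix -/
def J (m : ℕ) : Matrix (Fin (m+1)) (Fin (m+1)) ℂ :=
  Matrix.diagonal (fun i => if i = Fin.last m then -1 else 1)

lemma J_mul_J : J m * J m = 1 := by
  rw [J, diagonal_mul_diagonal]
  ext i j
  rcases eq_or_ne i j with rfl | h
  · simp only [diagonal_apply_eq, Matrix.one_apply_eq]
    split <;> norm_num
  · simp [Matrix.diagonal_apply_ne _ h, Matrix.one_apply_ne h]

lemma key1 {g : Matrix (Fin (m+1)) (Fin (m+1)) ℂ} (hg : InUmm1 g) :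
    gᴴ * J m * g = J m := by
  ext i j
  have h := hg (Pi.single j 1) (Pi.single i 1)
  simp only [Matrix.mulVec_single, MulOpposite.op_one, one_smul, Matrix.col_apply, mul_one, Pi.single_apply] at h
  rw [Matrix.mul_assoc, Matrix.mul_apply]
  simp only [conjTranspose_apply, J, Matrix.diagonal_mul, Fin.sum_univ_castSucc,
    (Fin.castSucc_lt_last _).ne, if_false, if_true, eq_self_iff_true]
  have e1 : ∀ x : Fin m, star (g x.castSucc i) * ((1:ℂ) * g x.castSucc j)
      = g x.castSucc j * star (g x.castSucc i) := fun x => by ring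
  rw [Finset.sum_congr rfl fun x _ => e1 x]
  have h2 : (∑ x : Fin m, g x.castSucc j * star (g x.castSucc i))
      + star (g (Fin.last m) i) * (-1 * g (Fin.last m) j)
      = (∑ x : Fin m, (if x.castSucc = j then (1:ℂ) else 0) * star (if x.castSucc = i then (1:ℂ) else 0)) -
      (if Fin.last m = j then (1:ℂ) else 0) * star (if Fin.last m = i then (1:ℂ) else 0) := by
    rw [← h]; ring
  rw [h2]
  simp only [apply_ite (star : ℂ → ℂ), star_one, star_zero, ite_mul, mul_ite, mul_one, mul_zero,
    one_mul, zero_mul]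
  rcases eq_or_ne i (Fin.last m) with rfl | hi
  · rcases eq_or_ne j (Fin.last m) with rfl | hj
    · simp [(Fin.castSucc_lt_last _).ne]
    · simp [(Fin.castSucc_lt_last _).ne, hj.symm, Ne.symm hj]
  · obtain ⟨i, rfl⟩ := Fin.exists_castSucc_eq.2 hi
    rcases eq_or_ne j (Fin.last m) with rfl | hj
    · simp [(Fin.castSucc_lt_last _).ne, Ne.symm ((Fin.castSucc_lt_last _).ne)]
    · obtain ⟨j, rfl⟩ := Fin.exists_castSucc_eq.2 hj
      simp only [Fin.castSucc_inj, (Fin.castSucc_lt_last _).ne, if_false]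
      rcases eq_or_ne i j with rfl | hij
      · simp [hi, Ne.symm hi]
      · simp [hij, Ne.symm hij, Ne.symm hi, Fin.castSucc_inj]

lemma key_pow {g : Matrix (Fin (m+1)) (Fin (m+1)) ℂ} (hg : InUmm1 g) (n : ℕ) :
    (g ^ n)ᴴ * J m * g ^ n = J m := by
  induction n with
  | zero => simp
  | succ n ih =>
    rw [pow_succ, conjTranspose_mul]
    have e : gᴴ * (g ^ n)ᴴ * J m * (g ^ n * g) = gᴴ * ((g ^ n)ᴴ * J m * g ^ n) * g := by
      simp only [Matrix.mul_assoc]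
    rw [e, ih, key1 hg]

lemma key_right {M : Matrix (Fin (m+1)) (Fin (m+1)) ℂ} (hM : Mᴴ * J m * M = J m) :
    M * J m * Mᴴ = J m := by
  have hM2 : Mᴴ * (J m * M) = J m := by rw [← Matrix.mul_assoc]; exact hM
  have h1 : (J m * Mᴴ * J m) * M = 1 := by
    calc (J m * Mᴴ * J m) * M = J m * (Mᴴ * (J m * M)) := by simp only [Matrix.mul_assoc]
      _ = J m * J m := by rw [hM2]
      _ = 1 := J_mul_J
  have h2 : M * (J m * Mᴴ * J m) = 1 := mul_eq_one_comm.2 h1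
  calc M * J m * Mᴴ = M * (J m * Mᴴ) * (J m * J m) := by
        rw [J_mul_J, Matrix.mul_one]; simp only [Matrix.mul_assoc]
    _ = (M * (J m * Mᴴ * J m)) * J m := by simp only [Matrix.mul_assoc]
    _ = J m := by rw [h2, Matrix.one_mul]

lemma star_mul_self' (z : ℂ) : star z * z = (Complex.normSq z : ℂ) := by
  rw [mul_comm]; exact Complex.mul_conj z

/-- entries of `MᴴJM = J`. -/
lemma entry_left {M : Matrix (Fin (m+1)) (Fin (m+1)) ℂ} (hM : Mᴴ * J m * M = J m)
    (i j : Fin (m+1)) :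
    (∑ k : Fin m, star (M k.castSucc i) * M k.castSucc j)
      - star (M (Fin.last m) i) * M (Fin.last m) j = (J m) i j := by
  have h := congrArg (fun N => N i j) hM
  simp only [Matrix.mul_apply, J, Matrix.diagonal_apply, conjTranspose_apply, ite_mul, mul_ite,
    mul_zero, zero_mul, Finset.sum_ite_eq, Finset.sum_ite_eq', Finset.mem_univ, if_true] at h
  rw [Fin.sum_univ_castSucc] at h
  simp only [(Fin.castSucc_lt_last _).ne, if_false, if_true, eq_self_iff_true, mul_one, mul_neg_one, mul_neg, neg_mul] at h
  simp only [J, Matrix.diagonal_apply]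
  linear_combination h

/-- entries of `MJMᴴ = J`. -/
lemma entry_right {M : Matrix (Fin (m+1)) (Fin (m+1)) ℂ} (hM : Mᴴ * J m * M = J m)
    (i j : Fin (m+1)) :
    (∑ k : Fin m, M i k.castSucc * star (M j k.castSucc))
      - M i (Fin.last m) * star (M j (Fin.last m)) = (J m) i j := by
  have h := congrArg (fun N => N i j) (key_right hM)
  simp only [Matrix.mul_apply, J, Matrix.diagonal_apply, conjTranspose_apply, ite_mul, mul_ite,
    mul_zero, zero_mul, Finset.sum_ite_eq, Finset.sum_ite_eq', Finset.mem_univ, if_true] at h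
  rw [Fin.sum_univ_castSucc] at h
  simp only [(Fin.castSucc_lt_last _).ne, if_false, if_true, eq_self_iff_true, mul_one, mul_neg_one, mul_neg, neg_mul] at h
  simp only [J, Matrix.diagonal_apply]
  linear_combination h

lemma mul_star_self' (z : ℂ) : z * star z = (Complex.normSq z : ℂ) := by
  rw [Complex.star_def]; exact Complex.mul_conj z

/-- sum of `normSq` of the last column entries above the corner. -/
lemma col_last {M : Matrix (Fin (m+1)) (Fin (m+1)) ℂ} (hM : Mᴴ * J m * M = J m) :
    (∑ k : Fin m, Complex.normSq (M k.castSucc (Fin.last m)))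
      = Complex.normSq (M (Fin.last m) (Fin.last m)) - 1 := by
  have h := entry_left hM (Fin.last m) (Fin.last m)
  simp only [J, Matrix.diagonal_apply_eq, eq_self_iff_true, if_true] at h
  have hc : ((∑ k : Fin m, Complex.normSq (M k.castSucc (Fin.last m)) : ℝ) : ℂ)
      = ((Complex.normSq (M (Fin.last m) (Fin.last m)) - 1 : ℝ) : ℂ) := by
    push_cast
    rw [Finset.sum_congr rfl fun k _ => (star_mul_self' (M k.castSucc (Fin.last m))).symm]
    linear_combination h + star_mul_self' (M (Fin.last m) (Fin.last m))
  exact_mod_cast hc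

lemma row_sum {M : Matrix (Fin (m+1)) (Fin (m+1)) ℂ} (hM : Mᴴ * J m * M = J m)
    (i : Fin (m+1)) :
    (∑ k : Fin m, Complex.normSq (M i k.castSucc))
      = Complex.normSq (M i (Fin.last m)) + (if i = Fin.last m then -1 else 1) := by
  have h := entry_right hM i i
  simp only [J, Matrix.diagonal_apply_eq, eq_self_iff_true, if_true] at h
  have hc : ((∑ k : Fin m, Complex.normSq (M i k.castSucc) : ℝ) : ℂ)
      = ((Complex.normSq (M i (Fin.last m)) + (if i = Fin.last m then -1 else 1) : ℝ) : ℂ) := by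
    rcases eq_or_ne i (Fin.last m) with rfl | hi
    · simp only [eq_self_iff_true, if_true] at h ⊢
      push_cast
      rw [Finset.sum_congr rfl fun k _ => (mul_star_self' (M (Fin.last m) k.castSucc)).symm]
      linear_combination h + mul_star_self' (M (Fin.last m) (Fin.last m))
    · simp only [hi, if_false] at h ⊢
      push_cast
      rw [Finset.sum_congr rfl fun k _ => (mul_star_self' (M i k.castSucc)).symm]
      linear_combination h + mul_star_self' (M i (Fin.last m))
  exact_mod_cast hc

lemma normSq_corner_ge_one {M : Matrix (Fin (m+1)) (Fin (m+1)) ℂ} (hM : Mᴴ * J m * M = J m) :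
    1 ≤ Complex.normSq (M (Fin.last m) (Fin.last m)) := by
  have h := col_last hM
  have h2 : 0 ≤ ∑ k : Fin m, Complex.normSq (M k.castSucc (Fin.last m)) :=
    Finset.sum_nonneg fun k _ => Complex.normSq_nonneg _
  linarith

lemma total_sum {M : Matrix (Fin (m+1)) (Fin (m+1)) ℂ} (hM : Mᴴ * J m * M = J m) :
    (∑ i, ∑ j, Complex.normSq (M i j))
      = 4 * Complex.normSq (M (Fin.last m) (Fin.last m)) + m - 3 := by
  have e1 : (∑ i, ∑ j, Complex.normSq (M i j))
      = ∑ i : Fin (m+1), (∑ j : Fin m, Complex.normSq (M i j.castSucc)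
          + Complex.normSq (M i (Fin.last m))) :=
    Finset.sum_congr rfl fun i _ => by rw [Fin.sum_univ_castSucc]
  rw [e1, Fin.sum_univ_castSucc]
  have e2 : ∀ k : Fin m, (∑ j : Fin m, Complex.normSq (M k.castSucc j.castSucc)
      + Complex.normSq (M k.castSucc (Fin.last m)))
      = 2 * Complex.normSq (M k.castSucc (Fin.last m)) + 1 := by
    intro k
    rw [row_sum hM k.castSucc]
    simp [(Fin.castSucc_lt_last k).ne]
    ring
  rw [Finset.sum_congr rfl fun k _ => e2 k, row_sum hM (Fin.last m)]
  simp only [eq_self_iff_true, if_true]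
  rw [Finset.sum_add_distrib, Finset.sum_const, ← Finset.mul_sum, col_last hM]
  simp only [Finset.card_univ, Fintype.card_fin, nsmul_eq_mul, mul_one]
  ring

attribute [local instance] Matrix.frobeniusSeminormedAddCommGroup
  Matrix.frobeniusNormedAddCommGroup Matrix.frobeniusNormedSpace
  Matrix.frobeniusNormedRing Matrix.frobeniusNormedAlgebra Matrix.frobeniusIsBoundedSMul

lemma frob_norm_eq (A : Matrix (Fin (m+1)) (Fin (m+1)) ℂ) :
    ‖A‖ = Real.sqrt (∑ i, ∑ j, Complex.normSq (A i j)) := by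
  rw [Matrix.frobenius_norm_def, Real.sqrt_eq_rpow]
  congr 1
  refine Finset.sum_congr rfl fun i _ => Finset.sum_congr rfl fun j _ => ?_
  rw [show ((2:ℝ) = ((2:ℕ):ℝ)) by norm_num, Real.rpow_natCast,
    Complex.sq_norm]

lemma abs_corner_le_norm {M : Matrix (Fin (m+1)) (Fin (m+1)) ℂ} (hM : Mᴴ * J m * M = J m) :
    ‖M (Fin.last m) (Fin.last m)‖ ≤ ‖M‖ := by
  rw [frob_norm_eq, Complex.norm_def]
  apply Real.sqrt_le_sqrt
  rw [total_sum hM]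
  have := normSq_corner_ge_one hM
  have hm : (0:ℝ) ≤ m := Nat.cast_nonneg m
  nlinarith

lemma norm_le_abs_corner {M : Matrix (Fin (m+1)) (Fin (m+1)) ℂ} (hM : Mᴴ * J m * M = J m) :
    ‖M‖ ≤ Real.sqrt (m+4) * ‖M (Fin.last m) (Fin.last m)‖ := by
  rw [frob_norm_eq, Complex.norm_def, ← Real.sqrt_mul (by positivity)]
  apply Real.sqrt_le_sqrt
  rw [total_sum hM]
  have := normSq_corner_ge_one hM
  have hm : (0:ℝ) ≤ m := Nat.cast_nonneg m
  nlinarith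

lemma matAction_norm_sq {M : Matrix (Fin (m+1)) (Fin (m+1)) ℂ} (hM : Mᴴ * J m * M = J m) :
    ‖matAction M 0‖ ^ 2 = 1 - 1 / Complex.normSq (M (Fin.last m) (Fin.last m)) := by
  have hq := normSq_corner_ge_one hM
  have hq0 : Complex.normSq (M (Fin.last m) (Fin.last m)) ≠ 0 := by linarith
  have he : ∀ i : Fin m, (matAction M 0) i
      = M i.castSucc (Fin.last m) / M (Fin.last m) (Fin.last m) := by
    intro i
    simp [matAction]
  rw [EuclideanSpace.norm_eq, Real.sq_sqrt (Finset.sum_nonneg fun i _ => sq_nonneg _)]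
  rw [Finset.sum_congr rfl fun i (_ : i ∈ Finset.univ) => by
    rw [he i, norm_div, div_pow, Complex.sq_norm,
      Complex.sq_norm]]
  rw [← Finset.sum_div, col_last hM]
  field_simp

lemma sandwich {M : Matrix (Fin (m+1)) (Fin (m+1)) ℂ} (hM : Mᴴ * J m * M = J m) :
    1 / (2 * Complex.normSq (M (Fin.last m) (Fin.last m))) ≤ 1 - ‖matAction M 0‖ ∧
    1 - ‖matAction M 0‖ ≤ 1 / Complex.normSq (M (Fin.last m) (Fin.last m)) := by
  have hq := normSq_corner_ge_one hM
  set q := Complex.normSq (M (Fin.last m) (Fin.last m)) with hqdef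
  have hq0 : 0 < q := by linarith
  set t := ‖matAction M 0‖ with htdef
  have ht0 : 0 ≤ t := norm_nonneg _
  have ht2 : t ^ 2 = 1 - 1 / q := matAction_norm_sq hM
  have hu : 0 < 1 / q := by positivity
  have ht1 : t ≤ 1 := by nlinarith
  have key : q * (1 - t ^ 2) = 1 := by rw [ht2]; field_simp; ring
  constructor
  · rw [div_le_iff₀ (by positivity)]
    nlinarith [mul_nonneg (le_of_lt hq0) (sq_nonneg (1 - t))]
  · rw [le_div_iff₀ hq0]
    nlinarith [mul_nonneg (mul_nonneg (le_of_lt hq0) ht0) (sub_nonneg.2 ht1)]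

end Stmt5Aux

section main

open Topology Stmt5Aux

attribute [local instance] Matrix.frobeniusSeminormedAddCommGroup
  Matrix.frobeniusNormedAddCommGroup Matrix.frobeniusNormedSpace
  Matrix.frobeniusNormedRing Matrix.frobeniusNormedAlgebra Matrix.frobeniusIsBoundedSMul

/-- If `g ∈ U(m,1)` and `λ₁(g)` is the spectral radius of `g`
(the largest absolute value of its eigenvalues), then
`lim_{n→∞} (1/n) log(1 − ‖gⁿ(0)‖) = −2 log λ₁(g)`. -/
theorem stmt5 {m : ℕ} (g : Matrix (Fin (m+1)) (Fin (m+1)) ℂ) (hg : InUmm1 g)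
    (lam : ℝ) (hlam : IsGreatest ((fun z : ℂ => ‖z‖) '' spectrum ℂ g) lam) :
    Tendsto (fun n : ℕ => (1 / (n : ℝ)) * Real.log (1 - ‖matAction (g ^ n) 0‖)) atTop
      (nhds (-2 * Real.log lam)) := by
  haveI : CompleteSpace (Matrix (Fin (m+1)) (Fin (m+1)) ℂ) := FiniteDimensional.complete ℂ _
  obtain ⟨⟨μ, hμσ, hμabs⟩, hub⟩ := hlam
  have hμabs : ‖μ‖ = lam := hμabs
  have hlam0 : 0 ≤ lam := hμabs ▸ norm_nonneg μ
  set a : ℕ → ℝ := fun n => ‖(g ^ n) (Fin.last m) (Fin.last m)‖ with ha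
  have hMn : ∀ n, (g ^ n)ᴴ * J m * (g ^ n) = J m := key_pow hg
  have ha1 : ∀ n, 1 ≤ a n := by
    intro n
    have h := normSq_corner_ge_one (hMn n)
    have h2 := Complex.sq_norm ((g ^ n) (Fin.last m) (Fin.last m))
    nlinarith [norm_nonneg ((g ^ n) (Fin.last m) (Fin.last m))]
  have hab : ∀ n, a n ≤ ‖g ^ n‖ := fun n => abs_corner_le_norm (hMn n)
  have hba : ∀ n, ‖g ^ n‖ ≤ Real.sqrt (m+4) * a n := fun n => norm_le_abs_corner (hMn n)
  have hnpos : ∀ n, (1:ℝ) ≤ ‖g ^ n‖ := fun n => le_trans (ha1 n) (hab n)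
  have hsqrt1 : (1:ℝ) ≤ Real.sqrt (m+4) := by
    rw [show (1:ℝ) = Real.sqrt 1 by simp]
    apply Real.sqrt_le_sqrt
    have : (0:ℝ) ≤ m := Nat.cast_nonneg m
    linarith
  -- Gelfand's formula
  have hsp : spectralRadius ℂ g = ENNReal.ofReal lam := by
    apply le_antisymm
    · apply iSup₂_le
      intro k hk
      have hk' : ‖k‖ ≤ lam := hub ⟨k, hk, rfl⟩
      rw [← enorm_eq_nnnorm, ← ofReal_norm]
      exact ENNReal.ofReal_le_ofReal hk'
    · have he : (ENNReal.ofReal lam) = ‖μ‖₊ := by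
        rw [← hμabs, ofReal_norm, enorm_eq_nnnorm]
      rw [he]
      exact le_iSup₂ (f := fun (k : ℂ) (_ : k ∈ spectrum ℂ g) => (‖k‖₊ : ENNReal)) μ hμσ
  have hgel := spectrum.pow_nnnorm_pow_one_div_tendsto_nhds_spectralRadius g
  rw [hsp] at hgel
  have hA : Tendsto (fun n : ℕ => ‖g ^ n‖ ^ (1/(n:ℝ))) atTop (𝓝 lam) := by
    have h1 := (ENNReal.tendsto_toReal (ENNReal.ofReal_ne_top)).comp hgel
    rw [ENNReal.toReal_ofReal hlam0] at h1
    refine h1.congr fun n => ?_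
    simp only [Function.comp]
    rw [← ENNReal.toReal_rpow, ENNReal.coe_toReal, coe_nnnorm]
  have hlam1 : (1:ℝ) ≤ lam := by
    refine ge_of_tendsto' hA fun n => Real.one_le_rpow (hnpos n) (by positivity)
  have hlog : Tendsto (fun n : ℕ => (1/(n:ℝ)) * Real.log ‖g ^ n‖) atTop (𝓝 (Real.log lam)) := by
    have h2 := (Real.continuousAt_log (by linarith : lam ≠ 0)).tendsto.comp hA
    refine h2.congr fun n => ?_
    simp only [Function.comp]
    rw [Real.log_rpow (by linarith [hnpos n])]
  -- squeeze to the corner entry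
  have hloga : Tendsto (fun n : ℕ => (1/(n:ℝ)) * Real.log (a n)) atTop (𝓝 (Real.log lam)) := by
    have h0 : Tendsto (fun n : ℕ => (1/(n:ℝ)) * Real.log (Real.sqrt (m+4))) atTop (𝓝 0) := by
      simpa using tendsto_one_div_atTop_nhds_zero_nat.mul_const (Real.log (Real.sqrt (m+4)))
    have hlow : Tendsto (fun n : ℕ => (1/(n:ℝ)) * Real.log ‖g ^ n‖
        - (1/(n:ℝ)) * Real.log (Real.sqrt (m+4))) atTop (𝓝 (Real.log lam)) := by
      simpa using hlog.sub h0
    apply tendsto_of_tendsto_of_tendsto_of_le_of_le hlow hlog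
    · intro n
      have l1 : Real.log ‖g ^ n‖ ≤ Real.log (Real.sqrt (m+4)) + Real.log (a n) := by
        rw [← Real.log_mul (by positivity) (by linarith [ha1 n])]
        exact Real.log_le_log (by linarith [hnpos n]) (hba n)
      have hn : (0:ℝ) ≤ 1/(n:ℝ) := by positivity
      have l2 := mul_le_mul_of_nonneg_left
        (by linarith : Real.log ‖g ^ n‖ - Real.log (Real.sqrt (m+4)) ≤ Real.log (a n)) hn
      rw [mul_sub] at l2
      exact l2
    · intro n
      exact mul_le_mul_of_nonneg_left
        (Real.log_le_log (by linarith [ha1 n]) (hab n)) (by positivity)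
  -- final sandwich
  have hlogq : ∀ n : ℕ, Real.log (Complex.normSq ((g ^ n) (Fin.last m) (Fin.last m)))
      = 2 * Real.log (a n) := by
    intro n
    rw [show Complex.normSq ((g ^ n) (Fin.last m) (Fin.last m)) = (a n) ^ 2 from
      (Complex.sq_norm _).symm, Real.log_pow]
    push_cast; ring
  have hup : ∀ n : ℕ, (1/(n:ℝ)) * Real.log (1 - ‖matAction (g ^ n) 0‖)
      ≤ (1/(n:ℝ)) * (-2 * Real.log (a n)) := by
    intro n
    have hqn := normSq_corner_ge_one (hMn n)
    have h1 := (sandwich (hMn n)).2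
    have h2 := (sandwich (hMn n)).1
    have hl : Real.log (1 - ‖matAction (g ^ n) 0‖)
        ≤ Real.log (1 / Complex.normSq ((g ^ n) (Fin.last m) (Fin.last m))) := by
      refine Real.log_le_log ?_ h1
      calc (0:ℝ) < 1 / (2 * Complex.normSq ((g ^ n) (Fin.last m) (Fin.last m))) := by positivity
        _ ≤ _ := h2
    have he : Real.log (1 / Complex.normSq ((g ^ n) (Fin.last m) (Fin.last m)))
        = -2 * Real.log (a n) := by
      rw [one_div, Real.log_inv, hlogq n]; ring
    exact mul_le_mul_of_nonneg_left (he ▸ hl) (by positivity)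
  have hlow : ∀ n : ℕ, (1/(n:ℝ)) * (-(Real.log 2) - 2 * Real.log (a n))
      ≤ (1/(n:ℝ)) * Real.log (1 - ‖matAction (g ^ n) 0‖) := by
    intro n
    have hqn := normSq_corner_ge_one (hMn n)
    have h2 := (sandwich (hMn n)).1
    have hl : Real.log (1 / (2 * Complex.normSq ((g ^ n) (Fin.last m) (Fin.last m))))
        ≤ Real.log (1 - ‖matAction (g ^ n) 0‖) := by
      refine Real.log_le_log (by positivity) h2
    have he : Real.log (1 / (2 * Complex.normSq ((g ^ n) (Fin.last m) (Fin.last m))))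
        = -(Real.log 2) - 2 * Real.log (a n) := by
      rw [one_div, Real.log_inv, Real.log_mul (by norm_num) (by linarith), hlogq n]; ring
    exact mul_le_mul_of_nonneg_left (he ▸ hl) (by positivity)
  have hupT : Tendsto (fun n : ℕ => (1/(n:ℝ)) * (-2 * Real.log (a n))) atTop
      (𝓝 (-2 * Real.log lam)) := by
    refine (hloga.const_mul (-2)).congr fun n => by ring
  have hlowT : Tendsto (fun n : ℕ => (1/(n:ℝ)) * (-(Real.log 2) - 2 * Real.log (a n))) atTop
      (𝓝 (-2 * Real.log lam)) := by
    have h0 : Tendsto (fun n : ℕ => (1/(n:ℝ)) * Real.log 2) atTop (𝓝 0) := by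
      simpa using tendsto_one_div_atTop_nhds_zero_nat.mul_const (Real.log 2)
    have := hupT.sub h0
    rw [sub_zero] at this
    refine this.congr fun n => by ring
  exact tendsto_of_tendsto_of_tendsto_of_le_of_le hlowT hupT hlow hup


end main
end
end

section
/- Let Γ be a subgroup of Aut(B^m) ≅ PU(m,1) that is Zariski dense, meaning: any real polynomial on the space of (m+1)×(m+1) complex matrices that vanishes on the preimage of Γ in U(m,1) vanishes on all of U(m,1). If P : ℂ^m → ℝ is a real polynomial, z₀ ∈ ∂B^m, and P vanishes on the orbit Γ·z₀, then P vanishes on all of ∂B^m. -/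
open Matrix

noncomputable section

/-- A real polynomial on the space of `(m+1) × (m+1)` complex matrices: a polynomial in
the real and imaginary parts of the entries. -/
def IsRealPolyMat {m : ℕ} (P : Matrix (Fin (m+1)) (Fin (m+1)) ℂ → ℝ) : Prop :=
  ∃ Q : MvPolynomial ((Fin (m+1)) × (Fin (m+1)) × Bool) ℝ,
    ∀ X, P X = MvPolynomial.eval
      (fun p => if p.2.2 then (X p.1 p.2.1).re else (X p.1 p.2.1).im) Q

/-- A real polynomial on `ℂ^m`: a polynomial in the real and imaginary parts of the
coordinates. -/
def IsRealPolyVec {m : ℕ} (P : EuclideanSpace ℂ (Fin m) → ℝ) : Prop :=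
  ∃ Q : MvPolynomial (Fin m × Bool) ℝ,
    ∀ z, P z = MvPolynomial.eval (fun p => if p.2 then (z p.1).re else (z p.1).im) Q


namespace Stmt9Aux

variable {m : ℕ}

lemma RP_const (a : ℝ) : IsRealPolyMat (m := m) (fun _ => a) :=
  ⟨MvPolynomial.C a, fun X => by simp⟩

lemma RP_add {F G : Matrix (Fin (m+1)) (Fin (m+1)) ℂ → ℝ} (hF : IsRealPolyMat F)
    (hG : IsRealPolyMat G) : IsRealPolyMat (fun g => F g + G g) := by
  obtain ⟨Q₁, h₁⟩ := hF; obtain ⟨Q₂, h₂⟩ := hG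
  exact ⟨Q₁ + Q₂, fun X => by simp [h₁, h₂]⟩

lemma RP_mul {F G : Matrix (Fin (m+1)) (Fin (m+1)) ℂ → ℝ} (hF : IsRealPolyMat F)
    (hG : IsRealPolyMat G) : IsRealPolyMat (fun g => F g * G g) := by
  obtain ⟨Q₁, h₁⟩ := hF; obtain ⟨Q₂, h₂⟩ := hG
  exact ⟨Q₁ * Q₂, fun X => by simp [h₁, h₂]⟩

lemma RP_neg {F : Matrix (Fin (m+1)) (Fin (m+1)) ℂ → ℝ} (hF : IsRealPolyMat F) :
    IsRealPolyMat (fun g => -F g) := by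
  obtain ⟨Q₁, h₁⟩ := hF
  exact ⟨-Q₁, fun X => by simp [h₁]⟩

lemma RP_sub {F G : Matrix (Fin (m+1)) (Fin (m+1)) ℂ → ℝ} (hF : IsRealPolyMat F)
    (hG : IsRealPolyMat G) : IsRealPolyMat (fun g => F g - G g) := by
  simpa [sub_eq_add_neg] using RP_add hF (RP_neg hG)

lemma RP_sum {ι : Type*} (s : Finset ι) (f : ι → Matrix (Fin (m+1)) (Fin (m+1)) ℂ → ℝ)
    (h : ∀ i ∈ s, IsRealPolyMat (f i)) :
    IsRealPolyMat (fun g => ∑ i ∈ s, f i g) := by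
  classical
  induction s using Finset.induction_on with
  | empty => simpa using RP_const (m := m) 0
  | @insert a s ha ih =>
      have := RP_add (h a (Finset.mem_insert_self a s))
        (ih fun i hi => h i (Finset.mem_insert_of_mem hi))
      simpa [Finset.sum_insert ha] using this

/-- complex-valued polynomial function of the matrix entries -/
def CPoly (f : Matrix (Fin (m+1)) (Fin (m+1)) ℂ → ℂ) : Prop :=
  IsRealPolyMat (fun g => (f g).re) ∧ IsRealPolyMat (fun g => (f g).im)

lemma CP_const (c : ℂ) : CPoly (m := m) (fun _ => c) := ⟨RP_const _, RP_const _⟩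

lemma CP_entry (i j : Fin (m+1)) : CPoly (fun g => g i j) :=
  ⟨⟨MvPolynomial.X (i, j, true), fun X => by simp⟩,
   ⟨MvPolynomial.X (i, j, false), fun X => by simp⟩⟩

lemma CP_add {f g : Matrix (Fin (m+1)) (Fin (m+1)) ℂ → ℂ} (hf : CPoly f) (hg : CPoly g) :
    CPoly (fun x => f x + g x) :=
  ⟨by simpa [Complex.add_re] using RP_add hf.1 hg.1,
   by simpa [Complex.add_im] using RP_add hf.2 hg.2⟩

lemma CP_mul {f g : Matrix (Fin (m+1)) (Fin (m+1)) ℂ → ℂ} (hf : CPoly f) (hg : CPoly g) :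
    CPoly (fun x => f x * g x) :=
  ⟨by simpa [Complex.mul_re] using RP_sub (RP_mul hf.1 hg.1) (RP_mul hf.2 hg.2),
   by simpa [Complex.mul_im] using RP_add (RP_mul hf.1 hg.2) (RP_mul hf.2 hg.1)⟩

lemma CP_conj {f : Matrix (Fin (m+1)) (Fin (m+1)) ℂ → ℂ} (hf : CPoly f) :
    CPoly (fun x => (starRingEnd ℂ) (f x)) :=
  ⟨by simpa using hf.1, by simpa using RP_neg hf.2⟩

lemma CP_sum {ι : Type*} (s : Finset ι) (f : ι → Matrix (Fin (m+1)) (Fin (m+1)) ℂ → ℂ)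
    (h : ∀ i ∈ s, CPoly (f i)) :
    CPoly (fun g => ∑ i ∈ s, f i g) :=
  ⟨by simpa [Complex.re_sum] using RP_sum s _ (fun i hi => (h i hi).1),
   by simpa [Complex.im_sum] using RP_sum s _ (fun i hi => (h i hi).2)⟩

variable (z₀ : EuclideanSpace ℂ (Fin m))

def numer (i : Fin m) (g : Matrix (Fin (m+1)) (Fin (m+1)) ℂ) : ℂ :=
  ∑ j : Fin m, g i.castSucc j.castSucc * z₀ j + g i.castSucc (Fin.last m)

def denom (g : Matrix (Fin (m+1)) (Fin (m+1)) ℂ) : ℂ :=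
  ∑ j : Fin m, g (Fin.last m) j.castSucc * z₀ j + g (Fin.last m) (Fin.last m)

lemma matAction_eq (g : Matrix (Fin (m+1)) (Fin (m+1)) ℂ) (i : Fin m) :
    matAction g z₀ i = numer z₀ i g / denom z₀ g := rfl

lemma CP_numer (i : Fin m) : CPoly (numer z₀ i) := by
  unfold numer
  exact CP_add (CP_sum _ _ fun j _ => CP_mul (CP_entry _ _) (CP_const (z₀ j))) (CP_entry _ _)

lemma CP_denom : CPoly (denom z₀) := by
  unfold denom
  exact CP_add (CP_sum _ _ fun j _ => CP_mul (CP_entry _ _) (CP_const (z₀ j))) (CP_entry _ _)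

lemma RP_nsq : IsRealPolyMat (fun g => Complex.normSq (denom z₀ g)) := by
  have := RP_add (RP_mul (CP_denom z₀).1 (CP_denom z₀).1) (RP_mul (CP_denom z₀).2 (CP_denom z₀).2)
  simpa [Complex.normSq_apply] using this

lemma nsq_div_re (v w : ℂ) (hw : w ≠ 0) :
    Complex.normSq w * (v / w).re = (v * (starRingEnd ℂ) w).re := by
  have h : Complex.normSq w ≠ 0 := by simpa [Complex.normSq_eq_zero] using hw
  rw [Complex.div_re, Complex.mul_re, Complex.conj_re, Complex.conj_im]
  field_simp
  ring

lemma nsq_div_im (v w : ℂ) (hw : w ≠ 0) :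
    Complex.normSq w * (v / w).im = (v * (starRingEnd ℂ) w).im := by
  have h : Complex.normSq w ≠ 0 := by simpa [Complex.normSq_eq_zero] using hw
  rw [Complex.div_im, Complex.mul_im, Complex.conj_re, Complex.conj_im]
  field_simp
  ring

lemma key (Q : MvPolynomial (Fin m × Bool) ℝ) :
    ∃ (n : ℕ) (F : Matrix (Fin (m+1)) (Fin (m+1)) ℂ → ℝ), IsRealPolyMat F ∧
      ∀ g, denom z₀ g ≠ 0 →
        (Complex.normSq (denom z₀ g))^n *
          MvPolynomial.eval
            (fun p => if p.2 then (matAction g z₀ p.1).re else (matAction g z₀ p.1).im) Q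
          = F g := by
  induction Q using MvPolynomial.induction_on with
  | C a => exact ⟨0, fun _ => a, RP_const a, fun g _ => by simp⟩
  | add p q hp hq =>
      obtain ⟨n₁, F₁, hF₁, h₁⟩ := hp
      obtain ⟨n₂, F₂, hF₂, h₂⟩ := hq
      refine ⟨n₁ + n₂,
        fun g => Complex.normSq (denom z₀ g) ^ n₂ * F₁ g
          + Complex.normSq (denom z₀ g) ^ n₁ * F₂ g, ?_, ?_⟩
      · have hpow : ∀ k : ℕ, IsRealPolyMat (fun g => Complex.normSq (denom z₀ g) ^ k) := by
          intro k
          induction k with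
          | zero => simpa using RP_const (m := m) 1
          | succ k ih => simpa [pow_succ] using RP_mul ih (RP_nsq z₀)
        exact RP_add (RP_mul (hpow n₂) hF₁) (RP_mul (hpow n₁) hF₂)
      · intro g hg
        dsimp only
        rw [map_add, ← h₁ g hg, ← h₂ g hg]
        ring
  | mul_X p s hp =>
      obtain ⟨n, F, hF, h⟩ := hp
      obtain ⟨i, b⟩ := s
      refine ⟨n + 1, fun g => F g *
        (if b then (numer z₀ i g * (starRingEnd ℂ) (denom z₀ g)).re
         else (numer z₀ i g * (starRingEnd ℂ) (denom z₀ g)).im), ?_, ?_⟩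
      · have hcp : CPoly (fun g => numer z₀ i g * (starRingEnd ℂ) (denom z₀ g)) :=
          CP_mul (CP_numer z₀ i) (CP_conj (CP_denom z₀))
        cases b
        · simpa using RP_mul hF hcp.2
        · simpa using RP_mul hF hcp.1
      · intro g hg
        dsimp only
        rw [MvPolynomial.eval_mul, MvPolynomial.eval_X]
        have hc : Complex.normSq (denom z₀ g) *
            (if (i, b).2 then (matAction g z₀ (i, b).1).re else (matAction g z₀ (i, b).1).im)
            = (if b then (numer z₀ i g * (starRingEnd ℂ) (denom z₀ g)).re
               else (numer z₀ i g * (starRingEnd ℂ) (denom z₀ g)).im) := by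
          cases b
          · simpa [matAction_eq] using nsq_div_im (numer z₀ i g) (denom z₀ g) hg
          · simpa [matAction_eq] using nsq_div_re (numer z₀ i g) (denom z₀ g) hg
        calc Complex.normSq (denom z₀ g) ^ (n + 1) *
              ((MvPolynomial.eval fun p =>
                  if p.2 then (matAction g z₀ p.1).re else (matAction g z₀ p.1).im) p *
                (if (i, b).2 then (matAction g z₀ (i, b).1).re else (matAction g z₀ (i, b).1).im))
            = (Complex.normSq (denom z₀ g) ^ n *
                (MvPolynomial.eval fun p =>
                  if p.2 then (matAction g z₀ p.1).re else (matAction g z₀ p.1).im) p) *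
              (Complex.normSq (denom z₀ g) *
                (if (i, b).2 then (matAction g z₀ (i, b).1).re
                 else (matAction g z₀ (i, b).1).im)) := by ring
          _ = _ := by rw [h g hg, hc]

lemma sum_normSq_eq_one (hz₀ : ‖z₀‖ = 1) : ∑ i : Fin m, Complex.normSq (z₀ i) = 1 := by
  have h : ‖z₀‖ ^ 2 = ∑ i : Fin m, ‖z₀ i‖ ^ 2 := by
    rw [EuclideanSpace.norm_eq, Real.sq_sqrt (by positivity)]
  rw [hz₀, one_pow] at h
  calc ∑ i : Fin m, Complex.normSq (z₀ i) = ∑ i : Fin m, ‖z₀ i‖ ^ 2 := by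
        exact Finset.sum_congr rfl fun i _ => by
          rw [Complex.sq_norm]
    _ = 1 := h.symm

lemma denom_ne_zero (hz₀ : ‖z₀‖ = 1) (g : Matrix (Fin (m+1)) (Fin (m+1)) ℂ)
    (hg : InUmm1 g) : denom z₀ g ≠ 0 := by
  intro hd
  set v : Fin (m+1) → ℂ := Fin.snoc (fun i => z₀ i) 1 with hv
  have hvc : ∀ i : Fin m, v i.castSucc = z₀ i := fun i => Fin.snoc_castSucc _ _ _
  have hvl : v (Fin.last m) = 1 := Fin.snoc_last _ _
  -- the last coordinate of g.mulVec v is exactly denom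
  have hlast : g.mulVec v (Fin.last m) = denom z₀ g := by
    rw [mulVec, dotProduct, Fin.sum_univ_castSucc]
    simp only [denom, hvl, mul_one]
    congr 1
    exact Finset.sum_congr rfl fun i _ => by rw [hvc]
  -- apply InUmm1 with v v
  have h1 := hg v v
  have hrhs : (∑ i : Fin m, v i.castSucc * star (v i.castSucc))
      - v (Fin.last m) * star (v (Fin.last m)) = 0 := by
    simp only [hvc, hvl, mul_one, star_one]
    have : ∀ i : Fin m, z₀ i * star (z₀ i) = (Complex.normSq (z₀ i) : ℂ) := by
      intro i; rw [← Complex.mul_conj]; rfl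
    rw [Finset.sum_congr rfl fun i _ => this i, ← Complex.ofReal_sum,
      sum_normSq_eq_one z₀ hz₀]
    simp
  rw [hrhs, hlast, hd] at h1
  simp only [mul_zero, star_zero, zero_mul, sub_zero] at h1
  -- each coordinate of (g.mulVec v) ∘ castSucc is zero
  have hzero : ∀ i : Fin m, g.mulVec v i.castSucc = 0 := by
    have hre : ∑ i : Fin m, Complex.normSq (g.mulVec v i.castSucc) = 0 := by
      have : ∀ i : Fin m, g.mulVec v i.castSucc * star (g.mulVec v i.castSucc)
          = (Complex.normSq (g.mulVec v i.castSucc) : ℂ) := by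
        intro i; rw [← Complex.mul_conj]; rfl
      rw [Finset.sum_congr rfl fun i _ => this i, ← Complex.ofReal_sum] at h1
      exact_mod_cast h1
    intro i
    have := (Finset.sum_eq_zero_iff_of_nonneg
      (fun j _ => Complex.normSq_nonneg _)).1 hre i (Finset.mem_univ i)
    exact Complex.normSq_eq_zero.1 this
  -- now pair with w = e_last
  set w : Fin (m+1) → ℂ := Fin.snoc (fun _ => 0) 1 with hw
  have h2 := hg v w
  have hwc : ∀ i : Fin m, w i.castSucc = 0 := fun i => Fin.snoc_castSucc _ _ _
  have hwl : w (Fin.last m) = 1 := Fin.snoc_last _ _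
  rw [hlast, hd] at h2
  simp only [hzero, zero_mul, Finset.sum_const_zero, mul_comm, mul_zero, zero_mul,
    sub_zero, zero_sub, hvc, hwc, hvl, hwl, star_zero, star_one, mul_one] at h2
  simp at h2

lemma exists_g (hz₀ : ‖z₀‖ = 1) (z : EuclideanSpace ℂ (Fin m)) (hz : ‖z‖ = 1) :
    ∃ g : Matrix (Fin (m+1)) (Fin (m+1)) ℂ, InUmm1 g ∧ matAction g z₀ = z := by
  rcases Nat.eq_zero_or_pos m with hm | hm
  · exfalso
    subst hm
    have : z₀ = 0 := PiLp.ext fun i => i.elim0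
    rw [this, norm_zero] at hz₀
    exact one_ne_zero hz₀.symm
  · set i₀ : Fin m := ⟨0, hm⟩ with hi₀
    have hcard : Module.finrank ℂ (EuclideanSpace ℂ (Fin m)) = Fintype.card (Fin m) := by
      simp [finrank_euclideanSpace]
    have horth : ∀ y : EuclideanSpace ℂ (Fin m), ‖y‖ = 1 →
        Orthonormal ℂ (({i₀} : Set (Fin m)).restrict (fun _ => y)) := by
      intro y hy
      refine ⟨fun i => hy, fun i j hij => absurd (Subtype.ext ?_) hij⟩
      exact i.2.trans j.2.symm
    obtain ⟨b₀, hb₀⟩ := (horth z₀ hz₀).exists_orthonormalBasis_extension_of_card_eq hcard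
    obtain ⟨b₁, hb₁⟩ := (horth z hz).exists_orthonormalBasis_extension_of_card_eq hcard
    set f := b₀.repr.trans b₁.repr.symm with hf
    have hfz : f z₀ = z := by
      have h0 : z₀ = b₀ i₀ := (hb₀ i₀ rfl).symm
      have h1 : z = b₁ i₀ := (hb₁ i₀ rfl).symm
      rw [h0, h1, hf]
      simp [LinearIsometryEquiv.trans_apply, OrthonormalBasis.repr_self,
        OrthonormalBasis.repr_symm_single]
    -- f preserves the sesquilinear sum
    have hkey : ∀ v w : EuclideanSpace ℂ (Fin m),
        ∑ i : Fin m, f v i * star (f w i) = ∑ i : Fin m, v i * star (w i) := by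
      intro v w
      have h2 := f.inner_map_map w v
      simp only [PiLp.inner_apply, RCLike.inner_apply] at h2
      calc ∑ i : Fin m, f v i * star (f w i)
          = ∑ i : Fin m, (starRingEnd ℂ) (f w i) * f v i :=
            Finset.sum_congr rfl fun i _ => mul_comm _ _
        _ = ∑ i : Fin m, (starRingEnd ℂ) (w i) * v i :=
            (Finset.sum_congr rfl fun i _ => mul_comm _ _).trans (h2.trans (Finset.sum_congr rfl fun i _ => mul_comm _ _))
        _ = ∑ i : Fin m, v i * star (w i) :=
            Finset.sum_congr rfl fun i _ => mul_comm _ _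
    set A : Matrix (Fin m) (Fin m) ℂ := fun i j => f (EuclideanSpace.single j 1) i with hA
    have coord : ∀ (x : EuclideanSpace ℂ (Fin m)) (i : Fin m),
        x i = inner (𝕜 := ℂ) (EuclideanSpace.single i (1:ℂ)) x := by
      intro x i
      simp [PiLp.inner_apply, EuclideanSpace.single_apply]
    have hAmul : ∀ w : EuclideanSpace ℂ (Fin m), ∀ i : Fin m,
        ∑ j : Fin m, A i j * w j = f w i := by
      intro w i
      have hw : ∑ j : Fin m, w j • EuclideanSpace.single j (1:ℂ) = w := by
        have h3 := (EuclideanSpace.basisFun (Fin m) ℂ).sum_repr w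
        simpa [EuclideanSpace.basisFun_apply] using h3
      calc ∑ j : Fin m, A i j * w j
          = ∑ j : Fin m, inner (𝕜 := ℂ) (EuclideanSpace.single i (1:ℂ))
              (f (w j • EuclideanSpace.single j (1:ℂ))) := by
            refine Finset.sum_congr rfl fun j _ => ?_
            rw [_root_.map_smul, inner_smul_right,
              ← coord (f (EuclideanSpace.single j (1:ℂ))) i]
            simp only [hA]
            ring
        _ = inner (𝕜 := ℂ) (EuclideanSpace.single i (1:ℂ))
              (∑ j : Fin m, f (w j • EuclideanSpace.single j (1:ℂ))) := (inner_sum _ _ _).symm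
        _ = inner (𝕜 := ℂ) (EuclideanSpace.single i (1:ℂ)) (f w) := by
            rw [← map_sum, hw]
        _ = f w i := (coord (f w) i).symm
    -- the block matrix
    set g : Matrix (Fin (m+1)) (Fin (m+1)) ℂ := fun i =>
      Fin.lastCases (Fin.lastCases 1 (fun _ => 0))
        (fun i' => Fin.lastCases 0 (fun j' => A i' j')) i with hg
    have hgcc : ∀ i' j' : Fin m, g i'.castSucc j'.castSucc = A i' j' := by
      intro i' j'; simp [hg]
    have hgcl : ∀ i' : Fin m, g i'.castSucc (Fin.last m) = 0 := by
      intro i'; simp [hg]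
    have hglc : ∀ j' : Fin m, g (Fin.last m) j'.castSucc = 0 := by
      intro j'; simp [hg]
    have hgll : g (Fin.last m) (Fin.last m) = 1 := by simp [hg]
    have hmvl : ∀ v : Fin (m+1) → ℂ, g.mulVec v (Fin.last m) = v (Fin.last m) := by
      intro v
      rw [mulVec, dotProduct, Fin.sum_univ_castSucc]
      simp [hglc, hgll]
    have hmvc : ∀ (v : Fin (m+1) → ℂ) (i' : Fin m),
        g.mulVec v i'.castSucc = f (WithLp.toLp 2 (fun j => v j.castSucc)) i' := by
      intro v i'
      rw [mulVec, dotProduct, Fin.sum_univ_castSucc]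
      simp only [hgcc, hgcl, zero_mul, add_zero]
      exact hAmul (WithLp.toLp 2 (fun j => v j.castSucc)) i'
    refine ⟨g, ?_, ?_⟩
    · intro v w
      simp only [hmvl, hmvc]
      rw [hkey (WithLp.toLp 2 (fun j => v j.castSucc)) (WithLp.toLp 2 (fun j => w j.castSucc))]
    · ext i
      show (∑ j : Fin m, g i.castSucc j.castSucc * z₀ j + g i.castSucc (Fin.last m)) /
        (∑ j : Fin m, g (Fin.last m) j.castSucc * z₀ j + g (Fin.last m) (Fin.last m)) = z i
      rw [hgll]
      simp only [hgcc, hgcl, hglc, zero_mul, add_zero, Finset.sum_const_zero, zero_add, div_one]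
      rw [hAmul z₀ i, hfz]

end Stmt9Aux

/-- Let `G ⊆ U(m,1)` be the preimage of a Zariski dense subgroup
`Γ < PU(m,1)` (so `G` is a subgroup of `U(m,1)` closed under scaling by unit complex numbers),
where Zariski density means: any real polynomial on matrices vanishing on `G` vanishes on all
of `U(m,1)`. If `P : ℂ^m → ℝ` is a real polynomial, `z₀ ∈ ∂B^m`, and `P` vanishes on the
orbit `Γ·z₀`, then `P` vanishes on all of `∂B^m`. -/
theorem stmt9 {m : ℕ} (G : Set (Matrix (Fin (m+1)) (Fin (m+1)) ℂ))
    (hGU : ∀ g ∈ G, InUmm1 g)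
    (hone : (1 : Matrix (Fin (m+1)) (Fin (m+1)) ℂ) ∈ G)
    (hmul : ∀ g ∈ G, ∀ h ∈ G, g * h ∈ G)
    (hinv : ∀ g ∈ G, g⁻¹ ∈ G)
    (hscal : ∀ g ∈ G, ∀ u : ℂ, ‖u‖ = 1 → u • g ∈ G)
    (hZD : ∀ P : Matrix (Fin (m+1)) (Fin (m+1)) ℂ → ℝ, IsRealPolyMat P →
      (∀ g ∈ G, P g = 0) → ∀ g, InUmm1 g → P g = 0)
    (P : EuclideanSpace ℂ (Fin m) → ℝ) (hP : IsRealPolyVec P)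
    (z₀ : EuclideanSpace ℂ (Fin m)) (hz₀ : ‖z₀‖ = 1)
    (hvanish : ∀ g ∈ G, P (matAction g z₀) = 0) :
    ∀ z : EuclideanSpace ℂ (Fin m), ‖z‖ = 1 → P z = 0 := by
  intro z hz
  obtain ⟨Q, hQ⟩ := hP
  obtain ⟨n, F, hF, hFe⟩ := Stmt9Aux.key z₀ Q
  set F' : Matrix (Fin (m+1)) (Fin (m+1)) ℂ → ℝ :=
    fun g => Complex.normSq (Stmt9Aux.denom z₀ g) * F g with hF'
  have hF'p : IsRealPolyMat F' := Stmt9Aux.RP_mul (Stmt9Aux.RP_nsq z₀) hF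
  have hid : ∀ g, Complex.normSq (Stmt9Aux.denom z₀ g) ^ (n+1) * P (matAction g z₀) = F' g := by
    intro g
    by_cases hd : Stmt9Aux.denom z₀ g = 0
    · simp [hF', hd, pow_succ]
    · rw [hQ]
      have h1 := hFe g hd
      calc Complex.normSq (Stmt9Aux.denom z₀ g) ^ (n+1) *
            MvPolynomial.eval
              (fun p => if p.2 then (matAction g z₀ p.1).re else (matAction g z₀ p.1).im) Q
          = Complex.normSq (Stmt9Aux.denom z₀ g) *
            (Complex.normSq (Stmt9Aux.denom z₀ g) ^ n *
              MvPolynomial.eval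
                (fun p => if p.2 then (matAction g z₀ p.1).re else (matAction g z₀ p.1).im) Q) := by
            ring
        _ = F' g := by rw [h1]
  have hvan' : ∀ g ∈ G, F' g = 0 := fun g hg => by
    rw [← hid g, hvanish g hg, mul_zero]
  have hall := hZD F' hF'p hvan'
  obtain ⟨g, hgU, hgz⟩ := Stmt9Aux.exists_g z₀ hz₀ z hz
  have h0 := hall g hgU
  rw [← hid g] at h0
  have hd := Stmt9Aux.denom_ne_zero z₀ hz₀ g hgU
  have hne : Complex.normSq (Stmt9Aux.denom z₀ g) ^ (n+1) ≠ 0 :=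
    pow_ne_zero _ (by simpa [Complex.normSq_eq_zero] using hd)
  have h2 := (mul_eq_zero.1 h0).resolve_left hne
  rw [hgz] at h2
  exact h2

end
end

section
/- Let {g_n} ⊂ Aut(B^m) with g_n(0) → x ∈ ∂B^m and g_n⁻¹(0) → y ∈ ∂B^m. Then for every z in the closed ball with z ≠ y, g_n(z) → x, and the convergence is uniform on compact subsets of the closed ball minus {y}. -/
open Metric Filter Set
open scoped InnerProductSpace ComplexConjugate Topology

noncomputable section

namespace NSAux

variable {E : Type*} [NormedAddCommGroup E] [InnerProductSpace ℂ E]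

local notation "⟪" x ", " y "⟫" => @inner ℂ _ _ x y

/-- Möbius automorphism of the unit ball sending `a` to `0`. -/
def phi (a z : E) : E :=
  ((1 : ℂ) - ⟪a, z⟫)⁻¹ •
    (((1 : ℂ) - (1 - (Real.sqrt (1 - ‖a‖ ^ 2) : ℂ)) * (⟪a, z⟫ / ⟪a, a⟫)) • a
      - (Real.sqrt (1 - ‖a‖ ^ 2) : ℂ) • z)

omit [InnerProductSpace ℂ E] in
lemma sq_s (a : E) (ha : ‖a‖ ≤ 1) :
    ((Real.sqrt (1 - ‖a‖ ^ 2) : ℝ) : ℂ) ^ 2 = 1 - (‖a‖ : ℂ) ^ 2 := by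
  have h0 : (0:ℝ) ≤ 1 - ‖a‖ ^ 2 := by nlinarith [norm_nonneg a]
  rw [← Complex.ofReal_pow, Real.sq_sqrt h0]
  push_cast; ring

lemma inner_a_a (a : E) : ⟪a, a⟫ = (‖a‖ : ℂ) ^ 2 := inner_self_eq_norm_sq_to_K a

lemma phi_zero (a : E) : phi a 0 = a := by simp [phi]

lemma phi_self (a : E) : phi a a = 0 := by
  by_cases h0 : a = 0
  · simp [phi, h0]
  · have hA0 : ⟪a, a⟫ ≠ 0 := inner_self_ne_zero.mpr h0
    rw [phi]
    match_scalars
    field_simp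
    ring

lemma inner_ne_one {a z : E} (ha : ‖a‖ < 1) (hz : ‖z‖ ≤ 1) : ⟪a, z⟫ ≠ 1 := by
  intro hh
  have h1 := norm_inner_le_norm (𝕜 := ℂ) a z
  rw [hh] at h1
  simp only [norm_one] at h1
  nlinarith [norm_nonneg a, norm_nonneg z]

lemma phi_inner (a : E) (ha : ‖a‖ ≤ 1) (z w : E) (hz : ⟪a, z⟫ ≠ 1) (hw : ⟪a, w⟫ ≠ 1) :
    (1 - ⟪z, a⟫) * (1 - ⟪a, w⟫) * (1 - ⟪phi a z, phi a w⟫)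
      = (1 - (‖a‖ : ℂ) ^ 2) * (1 - ⟪z, w⟫) := by
  by_cases h0 : a = 0
  · subst h0; simp [phi]
  rw [← inner_a_a]
  set t : ℂ := (Real.sqrt (1 - ‖a‖ ^ 2) : ℂ) with hts
  have ht : conj t = t := by rw [hts]; exact Complex.conj_ofReal _
  set A := ⟪a, a⟫ with hAd
  have hA : A = 1 - t ^ 2 := by rw [hAd, inner_a_a, hts, sq_s a ha]; ring
  have hcA : conj A = A := by rw [hAd, inner_conj_symm]
  set α := ⟪a, z⟫ with hα
  set β := ⟪a, w⟫ with hβ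
  have hcz : ⟪z, a⟫ = conj α := by rw [hα, inner_conj_symm]
  have hca : (1:ℂ) - conj α ≠ 0 := by
    intro hh
    apply hz
    have : conj α = 1 := by linear_combination -hh
    simpa using congrArg conj this
  have hwb : (1:ℂ) - β ≠ 0 := sub_ne_zero.mpr (Ne.symm hw)
  have hA0 : (1:ℂ) - t ^ 2 ≠ 0 := by
    rw [← hA, hAd]; exact inner_self_ne_zero.mpr h0
  simp only [phi, inner_smul_left, inner_smul_right, inner_sub_left, inner_sub_right,
    map_sub, map_one, map_mul, map_inv₀, map_div₀, map_pow, ht, hcA, hcz,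
    ← hα, ← hβ, ← hAd]
  rw [hA]
  field_simp
  simp only [Complex.conj_ofReal, ← hts, ht]
  ring

lemma inner_a_phi (a : E) (ha : ‖a‖ ≤ 1) (z : E) (hz : ⟪a, z⟫ ≠ 1) :
    ⟪a, phi a z⟫ = (⟪a, a⟫ - ⟪a, z⟫) / (1 - ⟪a, z⟫) := by
  by_cases h0 : a = 0
  · subst h0; simp [phi]
  set t : ℂ := (Real.sqrt (1 - ‖a‖ ^ 2) : ℂ) with hts
  set A := ⟪a, a⟫ with hAd
  set α := ⟪a, z⟫ with hα
  have hA0 : A ≠ 0 := by rw [hAd]; exact inner_self_ne_zero.mpr h0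
  have hza : (1:ℂ) - α ≠ 0 := sub_ne_zero.mpr (Ne.symm hz)
  simp only [phi, inner_smul_right, inner_sub_right, ← hα, ← hAd]
  field_simp
  ring

lemma phi_phi (a : E) (ha : ‖a‖ < 1) (z : E) (hz : ⟪a, z⟫ ≠ 1) : phi a (phi a z) = z := by
  have ha' : ‖a‖ ≤ 1 := ha.le
  have hone : ((‖a‖:ℂ)^2) ≠ 1 := by
    intro hh
    have : (‖a‖:ℝ)^2 = 1 := by exact_mod_cast hh
    nlinarith [norm_nonneg a]
  by_cases h0 : a = 0
  · subst h0; simp [phi]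
  set t : ℂ := (Real.sqrt (1 - ‖a‖ ^ 2) : ℂ) with hts
  set A := ⟪a, a⟫ with hAd
  have hA : A = 1 - t ^ 2 := by rw [hAd, inner_a_a, hts, sq_s a ha']; ring
  set α := ⟪a, z⟫ with hα
  have hza : (1:ℂ) - α ≠ 0 := sub_ne_zero.mpr (Ne.symm hz)
  have hA0 : (1:ℂ) - t ^ 2 ≠ 0 := by rw [← hA, hAd]; exact inner_self_ne_zero.mpr h0
  have hpos : (0:ℝ) < 1 - ‖a‖ ^ 2 := by nlinarith [norm_nonneg a]
  have ht0 : t ≠ 0 := by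
    rw [hts]; exact_mod_cast ne_of_gt (Real.sqrt_pos.mpr hpos)
  conv_lhs => rw [phi]
  rw [inner_a_phi a ha' z hz]
  conv_lhs => rw [phi]
  rw [← hAd, ← hα]
  have hsimp : (1:ℂ) - (A - α) / (1 - α) = (1 - A) / (1 - α) := by
    field_simp
    ring
  have hden : (1:ℂ) - A ≠ 0 := by
    rw [hA]; simpa using pow_ne_zero 2 ht0
  rw [hsimp]
  match_scalars
  · rw [hA]; field_simp; ring
  · rw [hA]; field_simp; ring

lemma norm_phi_sq (a : E) (ha : ‖a‖ ≤ 1) (z : E) (hz : ⟪a, z⟫ ≠ 1) :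
    ‖(1:ℂ) - ⟪a, z⟫‖ ^ 2 * (1 - ‖phi a z‖ ^ 2) = (1 - ‖a‖ ^ 2) * (1 - ‖z‖ ^ 2) := by
  have h := phi_inner a ha z z hz hz
  rw [inner_a_a (phi a z)] at h
  rw [inner_a_a z] at h
  have hu : ((‖(1:ℂ) - ⟪a, z⟫‖ : ℝ) : ℂ) ^ 2 = (1 - ⟪z, a⟫) * (1 - ⟪a, z⟫) := by
    have h1 : (1:ℂ) - ⟪z, a⟫ = conj ((1:ℂ) - ⟪a, z⟫) := by
      rw [map_sub, map_one, inner_conj_symm]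
    rw [h1, mul_comm, Complex.mul_conj']
  have h2 : ((‖(1:ℂ) - ⟪a, z⟫‖ ^ 2 * (1 - ‖phi a z‖ ^ 2) : ℝ) : ℂ)
      = (((1 - ‖a‖ ^ 2) * (1 - ‖z‖ ^ 2) : ℝ) : ℂ) := by
    push_cast
    linear_combination h + (1 - ((‖phi a z‖ : ℝ) : ℂ) ^ 2) * hu
  exact_mod_cast h2

lemma phi_mem_ball (a : E) (ha : ‖a‖ < 1) {z : E} (hz : z ∈ ball (0:E) 1) :
    phi a z ∈ ball (0:E) 1 := by
  have hz1 : ‖z‖ < 1 := mem_ball_zero_iff.mp hz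
  have hne : ⟪a, z⟫ ≠ 1 := inner_ne_one ha hz1.le
  have h := norm_phi_sq a ha.le z hne
  have h1 : 0 < ‖(1:ℂ) - ⟪a, z⟫‖ := norm_pos_iff.mpr (sub_ne_zero.mpr (Ne.symm hne))
  rw [mem_ball_zero_iff]
  have hA : 0 < 1 - ‖a‖ ^ 2 := by nlinarith [norm_nonneg a]
  have hZ : 0 < 1 - ‖z‖ ^ 2 := by nlinarith [norm_nonneg z]
  by_contra hcon
  push_neg at hcon
  have hu2 : 0 < ‖(1:ℂ) - ⟪a, z⟫‖ ^ 2 := pow_pos h1 2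
  have hp : 1 - ‖phi a z‖ ^ 2 ≤ 0 := by nlinarith [norm_nonneg (phi a z)]
  nlinarith [mul_nonpos_of_nonneg_of_nonpos hu2.le hp, mul_pos hA hZ]

lemma phi_diffOn (a : E) (ha : ‖a‖ < 1) :
    DifferentiableOn ℂ (phi a) {z : E | ⟪a, z⟫ ≠ 1} := by
  have hι : Differentiable ℂ (fun z : E => (⟪a, z⟫ : ℂ)) := (innerSL ℂ a).differentiable
  have h1 : DifferentiableOn ℂ (fun z : E => ((1:ℂ) - ⟪a, z⟫)⁻¹) {z : E | ⟪a, z⟫ ≠ 1} := by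
    refine DifferentiableOn.inv ((differentiable_const (1:ℂ)).sub hι).differentiableOn ?_
    intro z hz
    exact sub_ne_zero.mpr (Ne.symm hz)
  have h2 : Differentiable ℂ (fun z : E =>
      (((1 : ℂ) - (1 - (Real.sqrt (1 - ‖a‖ ^ 2) : ℂ)) * (⟪a, z⟫ / ⟪a, a⟫)) • a
        - (Real.sqrt (1 - ‖a‖ ^ 2) : ℂ) • z)) := by
    have h3 : Differentiable ℂ (fun z : E => ((Real.sqrt (1 - ‖a‖ ^ 2) : ℝ) : ℂ) • z) :=
      differentiable_id.const_smul _
    have h4a : Differentiable ℂ (fun z : E => (⟪a, z⟫ / ⟪a, a⟫ : ℂ)) := by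
      simp only [div_eq_mul_inv]
      exact hι.mul_const _
    have h4b : Differentiable ℂ
        (fun z : E => ((1 - (Real.sqrt (1 - ‖a‖ ^ 2) : ℂ)) * (⟪a, z⟫ / ⟪a, a⟫) : ℂ)) :=
      by exact h4a.const_mul _
    have h4 : Differentiable ℂ (fun z : E =>
        ((1 : ℂ) - (1 - (Real.sqrt (1 - ‖a‖ ^ 2) : ℂ)) * (⟪a, z⟫ / ⟪a, a⟫))) :=
      (differentiable_const _).sub h4b
    exact (h4.smul_const a).sub h3
  exact h1.smul h2.differentiableOn

lemma closedBall_subset_S (a : E) (ha : ‖a‖ < 1) :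
    closedBall (0:E) 1 ⊆ {z : E | ⟪a, z⟫ ≠ 1} := by
  intro z hz
  exact inner_ne_one ha (mem_closedBall_zero_iff.mp hz)

lemma phi_diffOn_ball (a : E) (ha : ‖a‖ < 1) : DifferentiableOn ℂ (phi a) (ball 0 1) :=
  (phi_diffOn a ha).mono (ball_subset_closedBall.trans (closedBall_subset_S a ha))

lemma eq_of_inner_eq_one {y z : E} (hy : ‖y‖ = 1) (hz : ‖z‖ ≤ 1) (h1 : ⟪y, z⟫ = 1) :
    z = y := by
  have hns := norm_sub_sq (𝕜 := ℂ) y z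
  rw [h1] at hns
  simp only [RCLike.one_re, hy] at hns
  have h2 : ‖y - z‖ ^ 2 ≤ 0 := by rw [hns]; nlinarith [hz, norm_nonneg z]
  have h3 : ‖y - z‖ = 0 := by nlinarith [norm_nonneg (y - z), sq_nonneg ‖y - z‖]
  have h4 : y - z = 0 := norm_eq_zero.mp h3
  exact (sub_eq_zero.mp h4).symm

/-- Schwarz lemma for maps of the unit ball of a complex Hilbert space. -/
lemma schwarz_ball {F : E → E} (hd : DifferentiableOn ℂ F (ball 0 1))
    (hm : MapsTo F (ball 0 1) (ball 0 1)) (h0 : F 0 = 0) {z : E} (hz : z ∈ ball 0 1) :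
    ‖F z‖ ≤ ‖z‖ := by
  rcases eq_or_ne z 0 with rfl | hz0
  · simp [h0]
  have hzn : ‖z‖ ≠ 0 := norm_ne_zero_iff.mpr hz0
  set c : ℂ := (‖z‖ : ℂ) with hc
  have hc0 : c ≠ 0 := by simpa [hc] using hzn
  set ζ : E := c⁻¹ • z with hζ
  have hζ1 : ‖ζ‖ = 1 := by
    rw [hζ, norm_smul, norm_inv, hc, Complex.norm_real, Real.norm_eq_abs,
      abs_of_nonneg (norm_nonneg z)]
    field_simp
  set p : ℂ → E := fun t => F (t • ζ) with hp
  have hmap : ∀ t : ℂ, t ∈ ball (0:ℂ) 1 → t • ζ ∈ ball (0:E) 1 := by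
    intro t ht
    rw [mem_ball_zero_iff, norm_smul, hζ1, mul_one]
    exact mem_ball_zero_iff.mp ht
  have hpd : DifferentiableOn ℂ p (ball 0 1) :=
    hd.comp ((differentiable_id.smul_const ζ).differentiableOn) hmap
  have hpm : MapsTo p (ball 0 1) (ball (p 0) 1) := by
    intro t ht
    have : p 0 = 0 := by simp [hp, h0]
    rw [this]
    exact hm (hmap t ht)
  have hcb : c ∈ ball (0:ℂ) 1 := by
    rw [mem_ball_zero_iff, hc, Complex.norm_real, Real.norm_eq_abs,
      abs_of_nonneg (norm_nonneg z)]
    exact mem_ball_zero_iff.mp hz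
  have := Complex.dist_le_div_mul_dist_of_mapsTo_ball hpd (hpm.mono_right ball_subset_closedBall) hcb
  have hpc : p c = F z := by
    show F (c • ζ) = F z
    rw [hζ, smul_smul, mul_inv_cancel₀ hc0, one_smul]
  have hp0 : p 0 = 0 := by simp [hp, h0]
  rw [hpc, hp0, dist_zero_right, dist_zero_right, hc, Complex.norm_real,
    Real.norm_eq_abs, abs_of_nonneg (norm_nonneg z)] at this
  simpa using this

/-- A holomorphic self-map of the ball which is norm-preserving agrees with a linear
isometry, hence preserves inner products. -/
lemma inner_eq_of_norm_eq [CompleteSpace E] {F : E → E} (hd : DifferentiableOn ℂ F (ball 0 1))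
    (hne : ∀ z ∈ ball (0:E) 1, ‖F z‖ = ‖z‖) :
    ∀ z ∈ ball (0:E) 1, ∀ w ∈ ball (0:E) 1, ⟪F z, F w⟫ = ⟪z, w⟫ := by
  have hSC : StrictConvexSpace ℝ E := by
    letI : InnerProductSpace ℝ E := InnerProductSpace.rclikeToReal ℂ E
    exact inferInstance
  haveI := hSC
  have h0 : F 0 = 0 := by
    have := hne 0 (mem_ball_self one_pos)
    simpa using this
  have hd0 : DifferentiableAt ℂ F 0 :=
    hd.differentiableAt (isOpen_ball.mem_nhds (mem_ball_self one_pos))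
  set L := fderiv ℂ F 0 with hL
  -- main step : on each complex line, F is linear
  have key : ∀ ζ : E, ‖ζ‖ = 1 → ∀ t ∈ ball (0:ℂ) 1, F (t • ζ) = t • L ζ := by
    intro ζ hζ t htb
    set G : ℂ → E := fun t => F (t • ζ) with hG
    have hmap : ∀ s : ℂ, s ∈ ball (0:ℂ) 1 → s • ζ ∈ ball (0:E) 1 := by
      intro s hs
      rw [mem_ball_zero_iff, norm_smul, hζ, mul_one]
      exact mem_ball_zero_iff.mp hs
    have hGd : DifferentiableOn ℂ G (ball 0 1) :=
      hd.comp ((differentiable_id.smul_const ζ).differentiableOn) hmap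
    have hG0 : G 0 = 0 := by simp [hG, h0]
    have hGderiv : HasDerivAt G (L ζ) 0 := by
      have h1 : HasDerivAt (fun s : ℂ => s • ζ) ζ 0 := by
        simpa using (hasDerivAt_id (0:ℂ)).smul_const ζ
      have h2 : HasFDerivAt F L ((0:ℂ) • ζ) := by
        simpa using hd0.hasFDerivAt
      exact h2.comp_hasDerivAt 0 h1
    set H : ℂ → E := dslope G 0 with hH
    have hHd : DifferentiableOn ℂ H (ball 0 1) :=
      (Complex.differentiableOn_dslope (ball_mem_nhds 0 one_pos)).mpr hGd
    have hHne : ∀ s : ℂ, s ∈ ball (0:ℂ) 1 → s ≠ 0 → ‖H s‖ = 1 := by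
      intro s hs hs0
      rw [hH, dslope_of_ne _ hs0, slope_def_module, sub_zero, hG0, sub_zero,
        norm_smul, norm_inv]
      have : ‖G s‖ = ‖s‖ := by
        rw [hG]
        have := hne (s • ζ) (hmap s hs)
        rwa [norm_smul, hζ, mul_one] at this
      rw [this]
      exact inv_mul_cancel₀ (norm_ne_zero_iff.mpr hs0)
    have hH0 : ‖H 0‖ = 1 := by
      have hcont : ContinuousAt H 0 :=
        (hHd.differentiableAt (isOpen_ball.mem_nhds (mem_ball_self one_pos))).continuousAt
      have h1 : Tendsto (fun s => ‖H s‖) (𝓝[≠] (0:ℂ)) (𝓝 ‖H 0‖) :=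
        (hcont.norm.tendsto).mono_left nhdsWithin_le_nhds
      have h2 : Tendsto (fun s => ‖H s‖) (𝓝[≠] (0:ℂ)) (𝓝 1) := by
        refine Tendsto.congr' ?_ tendsto_const_nhds
        filter_upwards [self_mem_nhdsWithin,
          eventually_nhdsWithin_of_eventually_nhds
            (isOpen_ball.eventually_mem (mem_ball_self one_pos))] with s hs1 hs2
        exact (hHne s hs2 hs1).symm
      exact tendsto_nhds_unique h1 h2
    have hmax : IsMaxOn (norm ∘ H) (ball 0 1) 0 := by
      intro s hs
      show ‖H s‖ ≤ ‖H 0‖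
      rcases eq_or_ne s 0 with rfl | hs0
      · exact le_refl _
      · rw [hH0, hHne s hs hs0]
    have heq := Complex.eqOn_of_isPreconnected_of_isMaxOn_norm
      (convex_ball (0:ℂ) 1).isPreconnected isOpen_ball hHd (mem_ball_self one_pos) hmax
    have hH0' : H 0 = L ζ := by
      rw [hH, dslope_same]
      exact hGderiv.deriv
    rcases eq_or_ne t 0 with rfl | ht0
    · simp [h0]
    · have h3 := heq htb
      rw [Function.const_apply, hH0'] at h3
      rw [hH, dslope_of_ne _ ht0, slope_def_module, sub_zero, hG0, sub_zero] at h3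
      show G t = t • L ζ
      rw [← h3, smul_smul, mul_inv_cancel₀ ht0, one_smul]
  -- F agrees with L on the ball
  have hFL : ∀ z ∈ ball (0:E) 1, F z = L z := by
    intro z hz
    rcases eq_or_ne z 0 with rfl | hz0
    · simp [h0]
    · have hzn : ‖z‖ ≠ 0 := norm_ne_zero_iff.mpr hz0
      set c : ℂ := (‖z‖ : ℂ) with hc
      have hc0 : c ≠ 0 := by simpa [hc] using hzn
      have hζ1 : ‖c⁻¹ • z‖ = 1 := by
        rw [norm_smul, norm_inv, hc, Complex.norm_real, Real.norm_eq_abs,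
          abs_of_nonneg (norm_nonneg z)]
        field_simp
      have hcb : c ∈ ball (0:ℂ) 1 := by
        rw [mem_ball_zero_iff, hc, Complex.norm_real, Real.norm_eq_abs,
          abs_of_nonneg (norm_nonneg z)]
        exact mem_ball_zero_iff.mp hz
      have := key (c⁻¹ • z) hζ1 c hcb
      rw [smul_smul, mul_inv_cancel₀ hc0, one_smul] at this
      rw [this, map_smul, smul_smul, mul_inv_cancel₀ hc0, one_smul]
  -- L is an isometry
  have hLnorm : ∀ v : E, ‖L v‖ = ‖v‖ := by
    intro v
    rcases eq_or_ne v 0 with rfl | hv0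
    · simp
    · set c : ℂ := (((2 * ‖v‖)⁻¹ : ℝ) : ℂ) with hc
      have hvn : (0:ℝ) < ‖v‖ := norm_pos_iff.mpr hv0
      have hc0 : c ≠ 0 := by
        rw [hc]
        simp only [ne_eq, Complex.ofReal_eq_zero, inv_eq_zero]
        positivity
      have hcv : c • v ∈ ball (0:E) 1 := by
        rw [mem_ball_zero_iff, norm_smul, hc, Complex.norm_real, Real.norm_eq_abs,
          abs_of_nonneg (by positivity)]
        rw [inv_mul_eq_div, div_lt_one (by positivity)]
        linarith
      have h1 := hne (c • v) hcv
      rw [hFL _ hcv, map_smul, norm_smul, norm_smul] at h1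
      exact mul_left_cancel₀ (norm_ne_zero_iff.mpr hc0) h1
  set li : E →ₗᵢ[ℂ] E := ⟨(L : E →ₗ[ℂ] E), hLnorm⟩ with hli
  intro z hz w hw
  rw [hFL z hz, hFL w hw]
  exact li.inner_map_map z w

end NSAux

section KeyEst
variable {E : Type*} [NormedAddCommGroup E] [InnerProductSpace ℂ E] [CompleteSpace E]
local notation "⟪" x ", " y "⟫" => @inner ℂ _ _ x y
open NSAux

/-- The key identity `(1 - ⟪k 0, z⟫)(1 - ⟪f 0, f z⟫) = 1 - ‖k 0‖²` for an automorphism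
`f` of the ball with inverse `k`, valid for all `z` in the closed ball. -/
lemma key_est {f k : E → E}
    (hfol : DifferentiableOn ℂ f (ball 0 1))
    (hkol : DifferentiableOn ℂ k (ball 0 1))
    (hfball : MapsTo f (ball (0:E) 1) (ball 0 1))
    (hkball : MapsTo k (ball (0:E) 1) (ball 0 1))
    (hfcont : ContinuousOn f (closedBall 0 1))
    (hinv : ∀ z ∈ closedBall (0:E) 1, k (f z) = z ∧ f (k z) = z)
    {z : E} (hz : z ∈ closedBall (0:E) 1) :
    (1 - ⟪k 0, z⟫) * (1 - ⟪f 0, f z⟫) = 1 - (‖k 0‖ : ℂ) ^ 2 := by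
  have h0b : (0:E) ∈ ball (0:E) 1 := mem_ball_self one_pos
  have h0cb : (0:E) ∈ closedBall (0:E) 1 := mem_closedBall_self zero_le_one
  set a : E := k 0 with hadef
  have hab : a ∈ ball (0:E) 1 := hkball h0b
  have ha1 : ‖a‖ < 1 := mem_ball_zero_iff.mp hab
  -- the identity on the open ball
  have claim : ∀ u ∈ ball (0:E) 1,
      (1 - ⟪a, u⟫) * (1 - ⟪f 0, f u⟫) = 1 - (‖a‖ : ℂ) ^ 2 := by
    have hφd : DifferentiableOn ℂ (phi a) (ball 0 1) := phi_diffOn_ball a ha1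
    have hφm : MapsTo (phi a) (ball (0:E) 1) (ball 0 1) := fun u hu => phi_mem_ball a ha1 hu
    have hφinv : ∀ u ∈ ball (0:E) 1, phi a (phi a u) = u := fun u hu =>
      phi_phi a ha1 u (inner_ne_one ha1 (mem_ball_zero_iff.mp hu).le)
    set F : E → E := fun u => f (phi a u) with hFdef
    have hFd : DifferentiableOn ℂ F (ball 0 1) := hfol.comp hφd hφm
    have hFm : MapsTo F (ball (0:E) 1) (ball 0 1) := fun u hu => hfball (hφm hu)
    have hF0 : F 0 = 0 := by
      show f (phi a 0) = 0
      rw [phi_zero, hadef, (hinv 0 h0cb).2]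
    -- F is norm-preserving
    have hne : ∀ u ∈ ball (0:E) 1, ‖F u‖ = ‖u‖ := by
      intro u hu
      refine le_antisymm (schwarz_ball hFd hFm hF0 hu) ?_
      -- reverse inequality via the inverse map
      set G : E → E := fun w => phi a (k w) with hGdef
      have hGd : DifferentiableOn ℂ G (ball 0 1) := hφd.comp hkol hkball
      have hGm : MapsTo G (ball (0:E) 1) (ball 0 1) := fun w hw => hφm (hkball hw)
      have hG0 : G 0 = 0 := by
        show phi a (k 0) = 0
        rw [← hadef, phi_self]
      have hs := schwarz_ball hGd hGm hG0 (hFm hu)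
      have heq : G (F u) = u := by
        show phi a (k (f (phi a u))) = u
        rw [(hinv (phi a u) (ball_subset_closedBall (hφm hu))).1, hφinv u hu]
      rwa [heq] at hs
    have hinner := inner_eq_of_norm_eq hFd hne
    intro u hu
    have hαne : ⟪a, u⟫ ≠ 1 := inner_ne_one ha1 (mem_ball_zero_iff.mp hu).le
    have hgu : f u = F (phi a u) := by
      show f u = f (phi a (phi a u))
      rw [hφinv u hu]
    have hg0 : f 0 = F a := by
      show f 0 = f (phi a a)
      rw [phi_self]
    have h1 : ⟪f 0, f u⟫ = ⟪a, phi a u⟫ := by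
      rw [hgu, hg0]
      exact hinner a hab (phi a u) (hφm hu)
    rw [h1, inner_a_phi a ha1.le u hαne, inner_a_a a]
    have hden : (1:ℂ) - ⟪a, u⟫ ≠ 0 := sub_ne_zero.mpr (Ne.symm hαne)
    field_simp
    ring
  -- pass to the closed ball by continuity
  set u : ℕ → E := fun n => (((n:ℝ) + 1) / ((n:ℝ) + 2)) • z with hudef
  have hun : ∀ n : ℕ, u n ∈ ball (0:E) 1 := by
    intro n
    rw [mem_ball_zero_iff, hudef]
    have h1 : |((n:ℝ) + 1) / ((n:ℝ) + 2)| = ((n:ℝ) + 1) / ((n:ℝ) + 2) := by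
      rw [abs_of_nonneg]; positivity
    rw [norm_smul, Real.norm_eq_abs, h1]
    have hz1 : ‖z‖ ≤ 1 := mem_closedBall_zero_iff.mp hz
    have h2 : ((n:ℝ) + 1) / ((n:ℝ) + 2) < 1 := by
      rw [div_lt_one (by positivity)]; linarith
    calc ((n:ℝ) + 1) / ((n:ℝ) + 2) * ‖z‖ ≤ ((n:ℝ) + 1) / ((n:ℝ) + 2) * 1 := by
          exact mul_le_mul_of_nonneg_left hz1 (by positivity)
      _ = ((n:ℝ) + 1) / ((n:ℝ) + 2) := by ring
      _ < 1 := h2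
  have hut : Tendsto u atTop (𝓝 z) := by
    have hc : Tendsto (fun n : ℕ => ((n:ℝ) + 1) / ((n:ℝ) + 2)) atTop (𝓝 1) := by
      have h1 := (tendsto_add_atTop_iff_nat 1).2 (tendsto_natCast_div_add_atTop (1:ℝ))
      refine h1.congr fun n => ?_
      push_cast
      ring_nf
    have := hc.smul (tendsto_const_nhds : Tendsto (fun _ : ℕ => z) atTop (𝓝 z))
    simpa using this
  have hutw : Tendsto u atTop (𝓝[closedBall (0:E) 1] z) := by
    refine tendsto_nhdsWithin_of_tendsto_nhds_of_eventually_within _ hut ?_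
    exact Eventually.of_forall fun n => ball_subset_closedBall (hun n)
  have hfz : Tendsto (fun n => f (u n)) atTop (𝓝 (f z)) := (hfcont z hz).tendsto.comp hutw
  have hT1 : Tendsto (fun n => (1 - ⟪a, u n⟫) * (1 - ⟪f 0, f (u n)⟫)) atTop
      (𝓝 ((1 - ⟪a, z⟫) * (1 - ⟪f 0, f z⟫))) := by
    have hi1 : Tendsto (fun n => (⟪a, u n⟫ : ℂ)) atTop (𝓝 ⟪a, z⟫) :=
      ((innerSL ℂ a).continuous.tendsto z).comp hut
    have hi2 : Tendsto (fun n => (⟪f 0, f (u n)⟫ : ℂ)) atTop (𝓝 ⟪f 0, f z⟫) :=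
      ((innerSL ℂ (f 0)).continuous.tendsto (f z)).comp hfz
    exact (tendsto_const_nhds.sub hi1).mul (tendsto_const_nhds.sub hi2)
  have hT2 : Tendsto (fun n => (1 - ⟪a, u n⟫) * (1 - ⟪f 0, f (u n)⟫)) atTop
      (𝓝 (1 - (‖a‖ : ℂ) ^ 2)) := by
    have : (fun n => (1 - ⟪a, u n⟫) * (1 - ⟪f 0, f (u n)⟫))
        = fun _ : ℕ => 1 - (‖a‖ : ℂ) ^ 2 := by
      funext n
      exact claim (u n) (hun n)
    rw [this]
    exact tendsto_const_nhds
  exact tendsto_nhds_unique hT1 hT2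

end KeyEst

section Main
local notation "⟪" x ", " y "⟫" => @inner ℂ _ _ x y
open NSAux

/-- **North–South dynamics.** Let `gₙ` be automorphisms of the unit ball
(biholomorphisms of the open ball, with inverses `hₙ`, extending continuously to the closed
ball), with `gₙ(0) → x ∈ ∂B^m` and `gₙ⁻¹(0) → y ∈ ∂B^m`. Then `gₙ(z) → x` for every `z` in
the closed ball with `z ≠ y`, uniformly on compact subsets of the closed ball minus `{y}`. -/
theorem stmt11 {m : ℕ}
    (g h : ℕ → EuclideanSpace ℂ (Fin m) → EuclideanSpace ℂ (Fin m))
    (hgol : ∀ n, DifferentiableOn ℂ (g n) (ball 0 1))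
    (hhol : ∀ n, DifferentiableOn ℂ (h n) (ball 0 1))
    (hgball : ∀ n, MapsTo (g n) (ball (0 : EuclideanSpace ℂ (Fin m)) 1) (ball 0 1))
    (hhball : ∀ n, MapsTo (h n) (ball (0 : EuclideanSpace ℂ (Fin m)) 1) (ball 0 1))
    (hgcb : ∀ n, MapsTo (g n) (closedBall (0 : EuclideanSpace ℂ (Fin m)) 1) (closedBall 0 1))
    (hhcb : ∀ n, MapsTo (h n) (closedBall (0 : EuclideanSpace ℂ (Fin m)) 1) (closedBall 0 1))
    (hgcont : ∀ n, ContinuousOn (g n) (closedBall 0 1))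
    (hhcont : ∀ n, ContinuousOn (h n) (closedBall 0 1))
    (hinv : ∀ n, ∀ z ∈ closedBall (0 : EuclideanSpace ℂ (Fin m)) 1,
      h n (g n z) = z ∧ g n (h n z) = z)
    (x y : EuclideanSpace ℂ (Fin m)) (hx : ‖x‖ = 1) (hy : ‖y‖ = 1)
    (hgx : Tendsto (fun n => g n 0) atTop (nhds x))
    (hhy : Tendsto (fun n => h n 0) atTop (nhds y)) :
    (∀ z ∈ closedBall (0 : EuclideanSpace ℂ (Fin m)) 1, z ≠ y →
      Tendsto (fun n => g n z) atTop (nhds x)) ∧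
    (∀ K ⊆ closedBall (0 : EuclideanSpace ℂ (Fin m)) 1 \ {y}, IsCompact K →
      TendstoUniformlyOn (fun n z => g n z) (fun _ => x) atTop K) := by
  have UNIF : ∀ K ⊆ closedBall (0 : EuclideanSpace ℂ (Fin m)) 1 \ {y}, IsCompact K →
      TendstoUniformlyOn (fun n z => g n z) (fun _ => x) atTop K := by
    intro K hK hKc
    rw [Metric.tendstoUniformlyOn_iff]
    intro ε hε
    rcases K.eq_empty_or_nonempty with rfl | hKne
    · filter_upwards [] with n
      intro z hz
      exact absurd hz (notMem_empty z)
    have hfc : ContinuousOn (fun z : EuclideanSpace ℂ (Fin m) => ‖(1:ℂ) - ⟪y, z⟫‖) K :=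
      ((continuous_const.sub (innerSL ℂ y).continuous).norm).continuousOn
    obtain ⟨z₀, hz₀K, hz₀min⟩ := hKc.exists_isMinOn hKne hfc
    rw [isMinOn_iff] at hz₀min
    set c := ‖(1:ℂ) - ⟪y, z₀⟫‖ with hcdef
    have hc0 : 0 < c := by
      rw [hcdef, norm_pos_iff]
      intro hh
      have h1 : ⟪y, z₀⟫ = 1 := by linear_combination -hh
      have h2 := hK hz₀K
      exact h2.2 (mem_singleton_iff.mpr
        (eq_of_inner_eq_one hy (mem_closedBall_zero_iff.mp h2.1) h1))
    set δ := c / 2 * (ε / 2) ^ 2 / 2 with hδdef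
    have hδ : 0 < δ := by positivity
    have ev1 : ∀ᶠ n in atTop, dist (h n 0) y < c / 2 := by
      have := hhy.eventually (Metric.ball_mem_nhds y (by positivity : (0:ℝ) < c / 2))
      filter_upwards [this] with n hn
      exact mem_ball.mp hn
    have ev2 : ∀ᶠ n in atTop, 1 - ‖h n 0‖ ^ 2 < δ := by
      have ht : Tendsto (fun n => 1 - ‖h n 0‖ ^ 2) atTop (𝓝 (1 - ‖y‖ ^ 2)) :=
        tendsto_const_nhds.sub (hhy.norm.pow 2)
      rw [hy] at ht
      norm_num at ht
      exact ht.eventually_lt_const hδ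
    have ev3 : ∀ᶠ n in atTop, dist (g n 0) x < ε / 2 := by
      have := hgx.eventually (Metric.ball_mem_nhds x (by positivity : (0:ℝ) < ε / 2))
      filter_upwards [this] with n hn
      exact mem_ball.mp hn
    filter_upwards [ev1, ev2, ev3] with n h1 h2 h3
    intro z hzK
    obtain ⟨hzc, hzny⟩ := hK hzK
    have hz1 : ‖z‖ ≤ 1 := mem_closedBall_zero_iff.mp hzc
    have hay : ‖h n 0 - y‖ < c / 2 := by rwa [← dist_eq_norm]
    have hil : ‖(⟪h n 0 - y, z⟫ : ℂ)‖ ≤ ‖h n 0 - y‖ := by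
      calc ‖(⟪h n 0 - y, z⟫ : ℂ)‖ ≤ ‖h n 0 - y‖ * ‖z‖ := norm_inner_le_norm _ _
        _ ≤ ‖h n 0 - y‖ * 1 := mul_le_mul_of_nonneg_left hz1 (norm_nonneg _)
        _ = ‖h n 0 - y‖ := mul_one _
    have hden : c / 2 ≤ ‖(1:ℂ) - ⟪h n 0, z⟫‖ := by
      have t1 : c ≤ ‖(1:ℂ) - ⟪y, z⟫‖ := hz₀min z hzK
      have t2 : ‖(1:ℂ) - ⟪y, z⟫‖ - ‖(1:ℂ) - ⟪h n 0, z⟫‖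
          ≤ ‖((1:ℂ) - ⟪y, z⟫) - ((1:ℂ) - ⟪h n 0, z⟫)‖ := norm_sub_norm_le _ _
      have t3 : ((1:ℂ) - ⟪y, z⟫) - ((1:ℂ) - ⟪h n 0, z⟫) = ⟪h n 0 - y, z⟫ := by
        rw [inner_sub_left]; ring
      rw [t3] at t2
      linarith
    have hkey := key_est (hgol n) (hhol n) (hgball n) (hhball n) (hgcont n) (hinv n) hzc
    have hb1 : ‖h n 0‖ < 1 := mem_ball_zero_iff.mp (hhball n (mem_ball_self one_pos))
    have hnorm_eq : ‖(1:ℂ) - ⟪h n 0, z⟫‖ * ‖(1:ℂ) - ⟪g n 0, g n z⟫‖ = 1 - ‖h n 0‖ ^ 2 := by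
      have t4 := congrArg norm hkey
      rw [norm_mul] at t4
      have t5 : ((1:ℂ) - ((‖h n 0‖ : ℝ) : ℂ) ^ 2) = (((1 - ‖h n 0‖ ^ 2 : ℝ)) : ℂ) := by
        push_cast; ring
      rw [t5] at t4
      rw [t4, Complex.norm_real, Real.norm_eq_abs, abs_of_nonneg (by nlinarith [norm_nonneg (h n 0)])]
    have hprod : ‖(1:ℂ) - ⟪g n 0, g n z⟫‖ < (ε / 2) ^ 2 / 2 := by
      have hX : 0 ≤ ‖(1:ℂ) - ⟪g n 0, g n z⟫‖ := norm_nonneg _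
      nlinarith [mul_le_mul_of_nonneg_right hden hX, hnorm_eq, h2, hc0]
    have hgz1 : ‖g n z‖ ≤ 1 := mem_closedBall_zero_iff.mp (hgcb n hzc)
    have hg01 : ‖g n 0‖ ≤ 1 :=
      mem_closedBall_zero_iff.mp (hgcb n (mem_closedBall_self zero_le_one))
    have hsub : ‖g n z - g n 0‖ ^ 2 ≤ 2 * ‖(1:ℂ) - ⟪g n 0, g n z⟫‖ := by
      have hns := norm_sub_sq (𝕜 := ℂ) (g n 0) (g n z)
      have hre : |RCLike.re ((⟪g n 0, g n z⟫ : ℂ) - 1)| ≤ ‖(⟪g n 0, g n z⟫ : ℂ) - 1‖ :=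
        RCLike.abs_re_le_norm _
      have hrev : ‖(⟪g n 0, g n z⟫ : ℂ) - 1‖ = ‖(1:ℂ) - ⟪g n 0, g n z⟫‖ := by
        rw [← norm_neg]; ring_nf
      have hre2 : RCLike.re ((⟪g n 0, g n z⟫ : ℂ) - 1)
          = RCLike.re (⟪g n 0, g n z⟫ : ℂ) - 1 := by
        simp
      have h6 : ‖g n z - g n 0‖ = ‖g n 0 - g n z‖ := norm_sub_rev _ _
      rw [h6, hns]
      rw [hrev] at hre
      rw [hre2] at hre
      have h7 := abs_le.mp hre
      have p1 : ‖g n 0‖ ^ 2 ≤ 1 := pow_le_one₀ (norm_nonneg _) hg01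
      have p2 : ‖g n z‖ ^ 2 ≤ 1 := pow_le_one₀ (norm_nonneg _) hgz1
      linarith [h7.1, h7.2]
    have hfin : ‖g n z - g n 0‖ < ε / 2 := by
      nlinarith [norm_nonneg (g n z - g n 0), hsub, hprod]
    have t7 : dist x (g n z) ≤ dist x (g n 0) + dist (g n 0) (g n z) := dist_triangle _ _ _
    have t8 : dist (g n 0) (g n z) = ‖g n z - g n 0‖ := by
      rw [dist_eq_norm, norm_sub_rev]
    have t9 : dist x (g n 0) = dist (g n 0) x := dist_comm _ _
    rw [t8, t9] at t7
    linarith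
  refine ⟨?_, UNIF⟩
  intro z hz hzy
  have h1 := UNIF {z} ?_ isCompact_singleton
  · rw [Metric.tendstoUniformlyOn_iff] at h1
    rw [Metric.tendsto_nhds]
    intro ε hε
    filter_upwards [h1 ε hε] with n hn
    have := hn z rfl
    rwa [dist_comm] at this
  · intro w hw
    rw [mem_singleton_iff] at hw
    subst hw
    exact ⟨hz, by simpa using hzy⟩

end Main
end
end
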